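/- arXiv:2003.14394 — 4 statements merged into one kernel-verified Lean document; each statement's English description precedes it below -/
import Mathlib

section
/- Let G = (V,E) be an unweighted graph on n qubits and let λ_max^Z(G) denote the maximum eigenvalue of H^Z(G) = −(1/2)∑_{{i,j}∈E} Z_iZ_j. Then the maximum eigenvalue of the quantum Max Cut Hamiltonian satisfies ‖H_G‖ ≤ |E|/2 + 3·λ_max^Z(G). -/
open Matrix Finset
noncomputable section

/-- Pauli `X` matrix. -/
def PX : Matrix (Fin 2) (Fin 2) ℂ := !![0, 1; 1, 0]
/-- Pauli `Y` matrix. -/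
def PY : Matrix (Fin 2) (Fin 2) ℂ := !![0, -Complex.I; Complex.I, 0]
/-- Pauli `Z` matrix. -/
def PZ : Matrix (Fin 2) (Fin 2) ℂ := !![1, 0; 0, -1]

/-- The one-qubit operator `P` acting on qubit `i` of an `n`-qubit system
(tensored with the identity on all other qubits), written as a matrix in the
computational basis `Fin n → Fin 2` of `(ℂ²)^{⊗n}`. -/
def pauliAt (n : ℕ) (i : Fin n) (P : Matrix (Fin 2) (Fin 2) ℂ) :
    Matrix (Fin n → Fin 2) (Fin n → Fin 2) ℂ :=
  fun x y => P (x i) (y i) * ∏ k ∈ Finset.univ.erase i, (if x k = y k then (1 : ℂ) else 0)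

/-- The quantum Max Cut interaction term
`h_{ij} = (1/2)(I - X_i X_j - Y_i Y_j - Z_i Z_j)`. -/
def hTerm (n : ℕ) (i j : Fin n) : Matrix (Fin n → Fin 2) (Fin n → Fin 2) ℂ :=
  (1 / 2 : ℂ) • (1 - pauliAt n i PX * pauliAt n j PX - pauliAt n i PY * pauliAt n j PY
      - pauliAt n i PZ * pauliAt n j PZ)

/-- The quantum Max Cut Hamiltonian `H_G = ∑_{{i,j} ∈ E} w_{ij} h_{ij}` of a weighted
graph `G` (with a symmetric weight function `w`).  The double sum ranges over ordered
pairs and hence counts every edge twice, whence the factor `1/2`. -/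
def hamG (n : ℕ) (G : SimpleGraph (Fin n)) [DecidableRel G.Adj] (w : Fin n → Fin n → ℝ) :
    Matrix (Fin n → Fin 2) (Fin n → Fin 2) ℂ :=
  (1 / 2 : ℂ) • ∑ i, ∑ j, if G.Adj i j then (w i j : ℂ) • hTerm n i j else 0

/-- The energy `⟨ψ|A|ψ⟩` of a (unit) vector `ψ`; for Hermitian `A` this is real, and we
take the real part. -/
def energy {m : Type} [Fintype m] (A : Matrix m m ℂ) (ψ : m → ℂ) : ℝ :=
  (star ψ ⬝ᵥ A *ᵥ ψ).re

/-- The maximum eigenvalue of a Hermitian matrix `A`, expressed as the supremum of the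
energy `⟨ψ|A|ψ⟩` over unit vectors `ψ`. -/
def maxEig {m : Type} [Fintype m] (A : Matrix m m ℂ) : ℝ :=
  sSup { r | ∃ ψ : m → ℂ, ∑ x, ‖ψ x‖ ^ 2 = 1 ∧ r = energy A ψ }

/-- The total edge weight `W = ∑_{e ∈ E} w_e` (the double sum counts every edge twice). -/
def totalW (n : ℕ) (G : SimpleGraph (Fin n)) [DecidableRel G.Adj] (w : Fin n → Fin n → ℝ) : ℝ :=
  (1 / 2 : ℝ) * ∑ i, ∑ j, if G.Adj i j then w i j else 0

/-- `max_{e ∈ E} w_e`: the largest edge weight of the graph (`0` if there are no edges;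
for nonnegative weights this agrees with the maximum over the edge set). -/
def maxEdgeW (n : ℕ) (G : SimpleGraph (Fin n)) [DecidableRel G.Adj]
    (w : Fin n → Fin n → ℝ) : ℝ :=
  (Finset.univ : Finset (Fin n × Fin n)).fold max 0
    fun p => if G.Adj p.1 p.2 then w p.1 p.2 else 0

/-- `max_{e ∋ v} w_e`: the largest weight of an edge incident to the vertex `v`
(taken to be `0` for an isolated vertex). -/
def maxIncident (n : ℕ) (G : SimpleGraph (Fin n)) [DecidableRel G.Adj]
    (w : Fin n → Fin n → ℝ) (v : Fin n) : ℝ :=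
  (Finset.univ.filter fun j => G.Adj v j).fold max 0 (w v)

/-- `OPT(G) = ‖H_G‖`, the maximum eigenvalue of the (positive semidefinite)
Hamiltonian `H_G`. -/
def OPTval (n : ℕ) (G : SimpleGraph (Fin n)) [DecidableRel G.Adj]
    (w : Fin n → Fin n → ℝ) : ℝ :=
  maxEig (hamG n G w)

/-- `PROD(G)`: the supremum of `⟨φ|H_G|φ⟩` over product states
`φ = φ_1 ⊗ φ_2 ⊗ ⋯ ⊗ φ_n`, each `φ_i` a normalized single-qubit state. -/
def PRODval (n : ℕ) (G : SimpleGraph (Fin n)) [DecidableRel G.Adj]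
    (w : Fin n → Fin n → ℝ) : ℝ :=
  sSup { r | ∃ f : Fin n → Fin 2 → ℂ, (∀ i, ∑ b, ‖f i b‖ ^ 2 = 1) ∧
    r = energy (hamG n G w) (fun x => ∏ i, f i (x i)) }

/-- The computational basis state `|z⟩`, as a vector in `(ℂ²)^{⊗n}`. -/
def basisVec (n : ℕ) (z : Fin n → Fin 2) : (Fin n → Fin 2) → ℂ :=
  fun x => if x = z then 1 else 0

/-- The Hamiltonian `H^P(G) = -(1/2) ∑_{{i,j} ∈ E} P_i P_j` for a single Pauli matrix `P`
(the double sum over ordered pairs counts every edge twice, whence the factor `-(1/4)`). -/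
def hamPauli (n : ℕ) (G : SimpleGraph (Fin n)) [DecidableRel G.Adj]
    (P : Matrix (Fin 2) (Fin 2) ℂ) : Matrix (Fin n → Fin 2) (Fin n → Fin 2) ℂ :=
  (-(1 / 4) : ℂ) • ∑ i, ∑ j, if G.Adj i j then pauliAt n i P * pauliAt n j P else 0

/-! ### Auxiliary machinery -/

def prodMat (n : ℕ) (M : Fin n → Matrix (Fin 2) (Fin 2) ℂ) :
    Matrix (Fin n → Fin 2) (Fin n → Fin 2) ℂ :=
  fun x y => ∏ i, M i (x i) (y i)

lemma prodMat_mul (n : ℕ) (M N : Fin n → Matrix (Fin 2) (Fin 2) ℂ) :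
    prodMat n M * prodMat n N = prodMat n (fun i => M i * N i) := by
  funext x y
  simp only [prodMat, Matrix.mul_apply, Finset.prod_univ_sum, Fintype.piFinset_univ,
    ← Finset.prod_mul_distrib]

lemma prodMat_one (n : ℕ) : prodMat n (fun _ => 1) = 1 := by
  funext x y
  simp only [prodMat, Matrix.one_apply]
  by_cases h : x = y
  · subst h; simp
  · rw [if_neg h]
    obtain ⟨k, hk⟩ := Function.ne_iff.mp h
    exact Finset.prod_eq_zero (Finset.mem_univ k) (by simp [hk])

lemma prodMat_conjTranspose (n : ℕ) (M : Fin n → Matrix (Fin 2) (Fin 2) ℂ) :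
    (prodMat n M)ᴴ = prodMat n (fun i => (M i)ᴴ) := by
  funext x y
  simp [prodMat, Matrix.conjTranspose_apply, map_prod]

lemma pauliAt_eq_prodMat (n : ℕ) (i : Fin n) (P : Matrix (Fin 2) (Fin 2) ℂ) :
    pauliAt n i P = prodMat n (fun k => if k = i then P else 1) := by
  funext x y
  rw [prodMat, pauliAt, ← Finset.prod_erase_mul _ _ (Finset.mem_univ i)]
  simp only [if_pos rfl, mul_comm]
  congr 1
  exact Finset.prod_congr rfl fun k hk => by
    rw [if_neg (Finset.mem_erase.mp hk).1, Matrix.one_apply]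


lemma energy_add {m : Type} [Fintype m] (A B : Matrix m m ℂ) (ψ : m → ℂ) :
    energy (A + B) ψ = energy A ψ + energy B ψ := by
  simp [energy, Matrix.add_mulVec, dotProduct_add]


lemma star_dot_self (m : Type) [Fintype m] (ψ : m → ℂ) :
    star ψ ⬝ᵥ ψ = ((∑ x, ‖ψ x‖ ^ 2 : ℝ) : ℂ) := by
  simp only [dotProduct, Pi.star_apply]
  push_cast
  refine Finset.sum_congr rfl fun x _ => ?_
  rw [Complex.star_def, Complex.conj_mul']

lemma energy_smul_one {m : Type} [Fintype m] [DecidableEq m] (r : ℝ) (ψ : m → ℂ)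
    (hψ : ∑ x, ‖ψ x‖ ^ 2 = 1) :
    energy ((r : ℂ) • (1 : Matrix m m ℂ)) ψ = r := by
  have h : ((r : ℂ) • (1 : Matrix m m ℂ)) *ᵥ ψ = (r : ℂ) • ψ := by
    rw [Matrix.smul_mulVec, Matrix.one_mulVec]
  rw [energy, h, dotProduct_smul, star_dot_self, hψ]
  simp

lemma energy_conj {m : Type} [Fintype m] (V A : Matrix m m ℂ) (ψ : m → ℂ) :
    energy (V * A * Vᴴ) ψ = energy A (Vᴴ *ᵥ ψ) := by
  unfold energy
  congr 1
  rw [Matrix.star_mulVec, Matrix.conjTranspose_conjTranspose, Matrix.mulVec_mulVec,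
    Matrix.dotProduct_mulVec, Matrix.dotProduct_mulVec, Matrix.vecMul_vecMul,
    Matrix.mul_assoc]

lemma norm_conj_mulVec {m : Type} [Fintype m] [DecidableEq m] (V : Matrix m m ℂ)
    (hV : V * Vᴴ = 1) (ψ : m → ℂ) : ∑ x, ‖(Vᴴ *ᵥ ψ) x‖ ^ 2 = ∑ x, ‖ψ x‖ ^ 2 := by
  have h1 : star (Vᴴ *ᵥ ψ) ⬝ᵥ (Vᴴ *ᵥ ψ) = star ψ ⬝ᵥ ψ := by
    rw [Matrix.star_mulVec, Matrix.conjTranspose_conjTranspose,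
      Matrix.dotProduct_mulVec, Matrix.vecMul_vecMul, hV, Matrix.vecMul_one]
  have := (star_dot_self m (Vᴴ *ᵥ ψ)).symm.trans (h1.trans (star_dot_self m ψ))
  exact_mod_cast this


def eSet {m : Type} [Fintype m] (A : Matrix m m ℂ) : Set ℝ :=
  { r | ∃ ψ : m → ℂ, ∑ x, ‖ψ x‖ ^ 2 = 1 ∧ r = energy A ψ }

lemma eSet_bddAbove {m : Type} [Fintype m] (A : Matrix m m ℂ) : BddAbove (eSet A) := by
  refine ⟨∑ x, ∑ y, ‖A x y‖, fun r hr => ?_⟩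
  obtain ⟨ψ, hψ, rfl⟩ := hr
  have hb : ∀ x, ‖ψ x‖ ≤ 1 := by
    intro x
    have h1 : ‖ψ x‖ ^ 2 ≤ 1 := by
      rw [← hψ]
      exact Finset.single_le_sum (f := fun a => ‖ψ a‖ ^ 2) (fun a _ => sq_nonneg _) (Finset.mem_univ x)
    nlinarith [norm_nonneg (ψ x)]
  calc energy A ψ ≤ ‖star ψ ⬝ᵥ A *ᵥ ψ‖ := Complex.re_le_norm _
    _ ≤ ∑ x, ‖star (ψ x) * (A *ᵥ ψ) x‖ := norm_sum_le _ _
    _ ≤ ∑ x, ∑ y, ‖A x y‖ := by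
        refine Finset.sum_le_sum fun x _ => ?_
        rw [norm_mul, norm_star]
        calc ‖ψ x‖ * ‖(A *ᵥ ψ) x‖ ≤ 1 * ‖(A *ᵥ ψ) x‖ :=
              mul_le_mul_of_nonneg_right (hb x) (norm_nonneg _)
          _ = ‖∑ y, A x y * ψ y‖ := by rw [one_mul]; rfl
          _ ≤ ∑ y, ‖A x y * ψ y‖ := norm_sum_le _ _
          _ ≤ ∑ y, ‖A x y‖ := by
              refine Finset.sum_le_sum fun y _ => ?_
              rw [norm_mul]
              calc ‖A x y‖ * ‖ψ y‖ ≤ ‖A x y‖ * 1 :=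
                    mul_le_mul_of_nonneg_left (hb y) (norm_nonneg _)
                _ = ‖A x y‖ := mul_one _

lemma eSet_nonempty (n : ℕ) (A : Matrix (Fin n → Fin 2) (Fin n → Fin 2) ℂ) :
    (eSet A).Nonempty := by
  refine ⟨energy A (fun x => if x = (fun _ => 0) then 1 else 0), fun x => if x = (fun _ => 0) then 1 else 0, ?_, rfl⟩
  rw [Finset.sum_eq_single (fun _ => (0 : Fin 2))] <;> simp +contextual


def sq2 : ℂ := ((Real.sqrt 2 : ℝ) : ℂ)⁻¹

lemma sq2_mul_self : sq2 * sq2 = 1 / 2 := by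
  rw [sq2, ← mul_inv, ← Complex.ofReal_mul, Real.mul_self_sqrt (by norm_num)]
  norm_num

lemma sq2_conj : (starRingEnd ℂ) sq2 = sq2 := by
  rw [sq2, map_inv₀, Complex.conj_ofReal]


lemma sq2_sq : sq2 ^ 2 = 1 / 2 := by rw [pow_two, sq2_mul_self]

def UX : Matrix (Fin 2) (Fin 2) ℂ := !![sq2, sq2; sq2, -sq2]
def UY : Matrix (Fin 2) (Fin 2) ℂ := !![sq2, sq2; Complex.I * sq2, -(Complex.I * sq2)]

lemma UX_unitary : UX * UXᴴ = 1 := by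
  ext i j
  fin_cases i <;> fin_cases j <;>
    simp [UX, Matrix.mul_apply, Fin.sum_univ_two, Matrix.conjTranspose_apply, sq2_conj,
      Matrix.one_apply] <;> try ring_nf
  all_goals simp [sq2_sq, Complex.I_sq] <;> try ring_nf
  all_goals norm_num

lemma UX_PZ : UX * PZ * UXᴴ = PX := by
  ext i j
  fin_cases i <;> fin_cases j <;>
    simp [UX, PZ, PX, Matrix.mul_apply, Fin.sum_univ_two, Matrix.conjTranspose_apply, sq2_conj]
      <;> try ring_nf
  all_goals simp [sq2_sq, Complex.I_sq] <;> try ring_nf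
  all_goals norm_num

lemma UY_unitary : UY * UYᴴ = 1 := by
  ext i j
  fin_cases i <;> fin_cases j <;>
    simp [UY, Matrix.mul_apply, Fin.sum_univ_two, Matrix.conjTranspose_apply, sq2_conj,
      Matrix.one_apply, Complex.conj_I] <;> try ring_nf
  all_goals simp [sq2_sq, Complex.I_sq] <;> try ring_nf
  all_goals norm_num

lemma UY_PZ : UY * PZ * UYᴴ = PY := by
  ext i j
  fin_cases i <;> fin_cases j <;>
    simp [UY, PZ, PY, Matrix.mul_apply, Fin.sum_univ_two, Matrix.conjTranspose_apply, sq2_conj,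
      Complex.conj_I] <;> try ring_nf
  all_goals simp [sq2_sq, Complex.I_sq] <;> try ring_nf
  all_goals norm_num

lemma count_adj (n : ℕ) (G : SimpleGraph (Fin n)) [DecidableRel G.Adj] :
    (∑ i, ∑ j, if G.Adj i j then (1 : ℂ) else 0) = ((2 * G.edgeFinset.card : ℕ) : ℂ) := by
  have h1 : ∀ i, (∑ j, if G.Adj i j then (1 : ℂ) else 0) = ((G.degree i : ℕ) : ℂ) := by
    intro i
    simp [SimpleGraph.degree, SimpleGraph.neighborFinset_eq_filter, Finset.sum_boole]
  rw [Finset.sum_congr rfl fun i _ => h1 i, ← Nat.cast_sum,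
    SimpleGraph.sum_degrees_eq_twice_card_edges]

lemma hamG_decomp (n : ℕ) (G : SimpleGraph (Fin n)) [DecidableRel G.Adj] :
    hamG n G (fun _ _ => 1) =
      (((G.edgeFinset.card : ℝ) / 2 : ℝ) : ℂ) • (1 : Matrix (Fin n → Fin 2) (Fin n → Fin 2) ℂ)
        + hamPauli n G PX + hamPauli n G PY + hamPauli n G PZ := by
  unfold hamG hamPauli
  have key : ∀ i j : Fin n,
      (if G.Adj i j then (((1:ℝ):ℂ)) • hTerm n i j else 0) =
      (1/2 : ℂ) • ((if G.Adj i j then (1 : Matrix (Fin n → Fin 2) (Fin n → Fin 2) ℂ) else 0)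
        - (if G.Adj i j then pauliAt n i PX * pauliAt n j PX else 0)
        - (if G.Adj i j then pauliAt n i PY * pauliAt n j PY else 0)
        - (if G.Adj i j then pauliAt n i PZ * pauliAt n j PZ else 0)) := by
    intro i j
    by_cases h : G.Adj i j <;> simp [h, hTerm]
  simp only [key, ← Finset.smul_sum, smul_smul, Finset.sum_sub_distrib]
  have hone : ∀ i j : Fin n, (if G.Adj i j then (1 : Matrix (Fin n → Fin 2) (Fin n → Fin 2) ℂ) else 0)
      = (if G.Adj i j then (1:ℂ) else 0) • (1 : Matrix (Fin n → Fin 2) (Fin n → Fin 2) ℂ) := by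
    intro i j; by_cases h : G.Adj i j <;> simp [h]
  simp only [hone, ← Finset.sum_smul, count_adj]
  push_cast
  module

lemma conj_pauliAt (n : ℕ) (U P Q : Matrix (Fin 2) (Fin 2) ℂ) (hU : U * Uᴴ = 1)
    (hQ : U * P * Uᴴ = Q) (i : Fin n) :
    prodMat n (fun _ => U) * pauliAt n i P * (prodMat n (fun _ => U))ᴴ = pauliAt n i Q := by
  rw [pauliAt_eq_prodMat, pauliAt_eq_prodMat, prodMat_conjTranspose, prodMat_mul, prodMat_mul]
  refine congrArg (prodMat n) (funext fun k => ?_)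
  by_cases h : k = i
  · rw [if_pos h, if_pos h]; exact hQ
  · rw [if_neg h, if_neg h, mul_one]; exact hU

lemma conj_hamPauli (n : ℕ) (G : SimpleGraph (Fin n)) [DecidableRel G.Adj]
    (U Q : Matrix (Fin 2) (Fin 2) ℂ) (hU : U * Uᴴ = 1) (hQ : U * PZ * Uᴴ = Q) :
    prodMat n (fun _ => U) * hamPauli n G PZ * (prodMat n (fun _ => U))ᴴ = hamPauli n G Q := by
  set V := prodMat n (fun _ => U) with hV
  have hVu : V * Vᴴ = 1 := by
    rw [hV, prodMat_conjTranspose, prodMat_mul]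
    simp only [hU]
    exact prodMat_one n
  have hVu' : Vᴴ * V = 1 := mul_eq_one_comm.mp hVu
  unfold hamPauli
  rw [Matrix.mul_smul, Matrix.smul_mul]
  congr 1
  rw [Finset.mul_sum, Finset.sum_mul]
  refine Finset.sum_congr rfl fun i _ => ?_
  rw [Finset.mul_sum, Finset.sum_mul]
  refine Finset.sum_congr rfl fun j _ => ?_
  by_cases h : G.Adj i j
  · simp only [if_pos h]
    rw [show V * (pauliAt n i PZ * pauliAt n j PZ) * Vᴴ
        = (V * pauliAt n i PZ * Vᴴ) * (V * pauliAt n j PZ * Vᴴ) from by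
      simp only [Matrix.mul_assoc]
      rw [← Matrix.mul_assoc Vᴴ V, hVu', Matrix.one_mul],
      conj_pauliAt n U PZ Q hU hQ i, conj_pauliAt n U PZ Q hU hQ j]
  · simp [if_neg h]

lemma prodMat_unitary (n : ℕ) (U : Matrix (Fin 2) (Fin 2) ℂ) (hU : U * Uᴴ = 1) :
    prodMat n (fun _ => U) * (prodMat n (fun _ => U))ᴴ = 1 := by
  rw [prodMat_conjTranspose, prodMat_mul]
  simp only [hU]
  exact prodMat_one n

/-- For an unweighted graph `G` on `n` qubits,
`‖H_G‖ ≤ |E|/2 + 3 λ_max^Z(G)`, where `λ_max^Z(G)` is the maximum eigenvalue of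
`H^Z(G) = -(1/2)∑_{{i,j}∈E} Z_iZ_j`. -/
theorem maxEig_hamG_le_half_edges_add_three_lambdaZ (n : ℕ) (G : SimpleGraph (Fin n))
    [DecidableRel G.Adj] :
    maxEig (hamG n G fun _ _ => 1) ≤
      (G.edgeFinset.card : ℝ) / 2 + 3 * maxEig (hamPauli n G PZ) := by
  have hset : maxEig (hamG n G fun _ _ => 1) = sSup (eSet (hamG n G fun _ _ => 1)) := rfl
  rw [hset]
  refine csSup_le (eSet_nonempty n _) ?_
  rintro r ⟨ψ, hψ, rfl⟩
  have hbdd : BddAbove (eSet (hamPauli n G PZ)) := eSet_bddAbove _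
  have hZle : maxEig (hamPauli n G PZ) = sSup (eSet (hamPauli n G PZ)) := rfl
  have eZ_le : energy (hamPauli n G PZ) ψ ≤ maxEig (hamPauli n G PZ) :=
    le_csSup hbdd ⟨ψ, hψ, rfl⟩
  have conj_le : ∀ (U Q : Matrix (Fin 2) (Fin 2) ℂ), U * Uᴴ = 1 → U * PZ * Uᴴ = Q →
      energy (hamPauli n G Q) ψ ≤ maxEig (hamPauli n G PZ) := by
    intro U Q hU hQ
    rw [← conj_hamPauli n G U Q hU hQ, energy_conj]
    exact le_csSup hbdd ⟨_, by rw [norm_conj_mulVec _ (prodMat_unitary n U hU) ψ, hψ], rfl⟩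
  have eX_le := conj_le UX PX UX_unitary UX_PZ
  have eY_le := conj_le UY PY UY_unitary UY_PZ
  have hdec : energy (hamG n G fun _ _ => 1) ψ
      = (G.edgeFinset.card : ℝ) / 2 + energy (hamPauli n G PX) ψ
        + energy (hamPauli n G PY) ψ + energy (hamPauli n G PZ) ψ := by
    rw [hamG_decomp n G, energy_add, energy_add, energy_add,
      energy_smul_one ((G.edgeFinset.card : ℝ) / 2) ψ hψ]
  rw [hdec]
  linarith
end
end

section
/- Let G = (V,E,w) be a weighted graph with nonnegative edge weights and total weight W = ∑_{e∈E} w_e > 0. Then PROD(G)/OPT(G) ≥ 1/3 + (2/3)·( W / (2W + ∑_{v∈V} max_{e incident to v} w_e) ). -/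
open Matrix Finset
noncomputable section

set_option linter.unusedSectionVars false

namespace QMC

variable {n : ℕ}

/-- Tensor product of one-qubit matrices. -/
def tens (n : ℕ) (f : Fin n → Matrix (Fin 2) (Fin 2) ℂ) :
    Matrix (Fin n → Fin 2) (Fin n → Fin 2) ℂ :=
  fun x y => ∏ i, f i (x i) (y i)

lemma tens_mul (f g : Fin n → Matrix (Fin 2) (Fin 2) ℂ) :
    tens n f * tens n g = tens n (fun i => f i * g i) := by
  ext x y
  simp only [Matrix.mul_apply, tens]
  have : ∀ z : Fin n → Fin 2,
      (∏ i, f i (x i) (z i)) * ∏ i, g i (z i) (y i)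
        = ∏ i, (f i (x i) (z i) * g i (z i) (y i)) := by
    intro z; rw [← Finset.prod_mul_distrib]
  simp only [this]
  rw [← Fintype.piFinset_univ, ← Finset.prod_univ_sum (fun _ => Finset.univ)
    (fun i b => f i (x i) b * g i b (y i))]

lemma tens_one : tens n (fun _ => 1) = 1 := by
  ext x y
  simp only [tens, Matrix.one_apply]
  by_cases h : x = y
  · subst h; simp
  · rw [if_neg h]
    obtain ⟨i, hi⟩ : ∃ i, x i ≠ y i := by
      by_contra hc; push_neg at hc; exact h (funext hc)
    exact Finset.prod_eq_zero (Finset.mem_univ i) (if_neg hi)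

lemma tens_conjTranspose (f : Fin n → Matrix (Fin 2) (Fin 2) ℂ) :
    (tens n f)ᴴ = tens n (fun i => (f i)ᴴ) := by
  ext x y
  simp only [Matrix.conjTranspose_apply, tens, star_prod]

lemma pauliAt_eq_tens (i : Fin n) (P : Matrix (Fin 2) (Fin 2) ℂ) :
    pauliAt n i P = tens n (Function.update (fun _ => (1 : Matrix (Fin 2) (Fin 2) ℂ)) i P) := by
  ext x y
  simp only [pauliAt, tens]
  rw [← Finset.prod_erase_mul Finset.univ _ (Finset.mem_univ i), Function.update_self, mul_comm]
  congr 1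
  exact Finset.prod_congr rfl fun k hk => by
    rw [Function.update_of_ne (Finset.ne_of_mem_erase hk), Matrix.one_apply]

lemma pauliAt_mul_same (i : Fin n) (P Q : Matrix (Fin 2) (Fin 2) ℂ) :
    pauliAt n i P * pauliAt n i Q = pauliAt n i (P * Q) := by
  simp only [pauliAt_eq_tens, tens_mul]
  apply congrArg (tens n)
  funext k
  by_cases h : k = i
  · subst h; simp
  · simp [Function.update_of_ne h]

lemma pauliAt_mul_comm {i j : Fin n} (hij : i ≠ j) (P Q : Matrix (Fin 2) (Fin 2) ℂ) :
    pauliAt n i P * pauliAt n j Q = pauliAt n j Q * pauliAt n i P := by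
  simp only [pauliAt_eq_tens, tens_mul]
  apply congrArg (tens n)
  funext k
  by_cases h : k = i
  · subst h
    rw [Function.update_self, Function.update_of_ne hij, mul_one, one_mul]
  · by_cases h' : k = j
    · subst h'
      rw [Function.update_self, Function.update_of_ne h, mul_one, one_mul]
    · rw [Function.update_of_ne h, Function.update_of_ne h']

lemma pauliAt_smul (i : Fin n) (c : ℂ) (P : Matrix (Fin 2) (Fin 2) ℂ) :
    pauliAt n i (c • P) = c • pauliAt n i P := by
  ext x y
  simp [pauliAt, mul_assoc]

lemma pauliAt_add (i : Fin n) (P Q : Matrix (Fin 2) (Fin 2) ℂ) :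
    pauliAt n i (P + Q) = pauliAt n i P + pauliAt n i Q := by
  ext x y
  simp [pauliAt, add_mul]

lemma pauliAt_zero (i : Fin n) : pauliAt n i 0 = 0 := by
  ext x y; simp [pauliAt]

lemma pauliAt_one (i : Fin n) : pauliAt n i 1 = 1 := by
  rw [pauliAt_eq_tens]
  have : Function.update (fun _ : Fin n => (1 : Matrix (Fin 2) (Fin 2) ℂ)) i 1
      = fun _ => 1 := by
    funext k; by_cases h : k = i <;> simp [h]
  rw [this, tens_one]

lemma pauliAt_conjTranspose (i : Fin n) (P : Matrix (Fin 2) (Fin 2) ℂ) :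
    (pauliAt n i P)ᴴ = pauliAt n i Pᴴ := by
  simp only [pauliAt_eq_tens, tens_conjTranspose]
  apply congrArg (tens n)
  funext k
  by_cases h : k = i
  · subst h; simp
  · simp [Function.update_of_ne h]

end QMC

namespace QMC

/-- The three Pauli matrices. -/
def σp : Fin 3 → Matrix (Fin 2) (Fin 2) ℂ := ![PX, PY, PZ]

lemma PX_sq : PX * PX = 1 := by
  ext i j; fin_cases i <;> fin_cases j <;>
    simp [PX, Matrix.mul_apply, Fin.sum_univ_two, Matrix.one_apply]

lemma PY_sq : PY * PY = 1 := by
  ext i j; fin_cases i <;> fin_cases j <;>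
    simp [PY, Matrix.mul_apply, Fin.sum_univ_two, Matrix.one_apply]

lemma PZ_sq : PZ * PZ = 1 := by
  ext i j; fin_cases i <;> fin_cases j <;>
    simp [PZ, Matrix.mul_apply, Fin.sum_univ_two, Matrix.one_apply]

lemma sigma_sq : ∀ a : Fin 3, σp a * σp a = 1 := by
  intro a
  fin_cases a
  · exact PX_sq
  · exact PY_sq
  · exact PZ_sq

lemma PX_herm : PXᴴ = PX := by
  ext i j; fin_cases i <;> fin_cases j <;> simp [PX, Matrix.conjTranspose_apply]

lemma PY_herm : PYᴴ = PY := by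
  ext i j; fin_cases i <;> fin_cases j <;> simp [PY, Matrix.conjTranspose_apply]

lemma PZ_herm : PZᴴ = PZ := by
  ext i j; fin_cases i <;> fin_cases j <;> simp [PZ, Matrix.conjTranspose_apply]

lemma sigma_herm : ∀ a : Fin 3, (σp a)ᴴ = σp a := by
  intro a
  fin_cases a
  · exact PX_herm
  · exact PY_herm
  · exact PZ_herm

lemma PX_mul_PY : PX * PY = Complex.I • PZ := by
  ext i j; fin_cases i <;> fin_cases j <;>
    simp [PX, PY, PZ, Matrix.mul_apply, Fin.sum_univ_two]

lemma PY_mul_PX : PY * PX = -Complex.I • PZ := by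
  ext i j; fin_cases i <;> fin_cases j <;>
    simp [PX, PY, PZ, Matrix.mul_apply, Fin.sum_univ_two]

lemma PX_mul_PZ : PX * PZ = -Complex.I • PY := by
  ext i j; fin_cases i <;> fin_cases j <;>
    simp [PX, PY, PZ, Matrix.mul_apply, Fin.sum_univ_two]

lemma PZ_mul_PX : PZ * PX = Complex.I • PY := by
  ext i j; fin_cases i <;> fin_cases j <;>
    simp [PX, PY, PZ, Matrix.mul_apply, Fin.sum_univ_two]

lemma PY_mul_PZ : PY * PZ = Complex.I • PX := by
  ext i j; fin_cases i <;> fin_cases j <;>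
    simp [PX, PY, PZ, Matrix.mul_apply, Fin.sum_univ_two]

lemma PZ_mul_PY : PZ * PY = -Complex.I • PX := by
  ext i j; fin_cases i <;> fin_cases j <;>
    simp [PX, PY, PZ, Matrix.mul_apply, Fin.sum_univ_two]

lemma sigma_swap_entry (c c' d d' : Fin 2) :
    PX c c' * PX d d' + PY c c' * PY d d' + PZ c c' * PZ d d'
      = 2 * ((if c' = d then (1 : ℂ) else 0) * (if d' = c then 1 else 0))
        - (if c = c' then 1 else 0) * (if d = d' then 1 else 0) := by
  fin_cases c <;> fin_cases c' <;> fin_cases d <;> fin_cases d' <;>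
    norm_num [PX, PY, PZ]

end QMC

namespace QMC

variable {m : Type} [Fintype m] [DecidableEq m]

lemma inner_expand (A : Matrix m m ℂ) (ψ : m → ℂ) :
    star ψ ⬝ᵥ A *ᵥ ψ = ∑ x, ∑ y, (starRingEnd ℂ) (ψ x) * A x y * ψ y := by
  simp [dotProduct, Matrix.mulVec, Finset.mul_sum, mul_assoc, Pi.star_apply,
    RCLike.star_def]

lemma energy_add (A B : Matrix m m ℂ) (ψ : m → ℂ) :
    energy (A + B) ψ = energy A ψ + energy B ψ := by
  simp [energy, Matrix.add_mulVec, dotProduct_add]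

lemma energy_sub (A B : Matrix m m ℂ) (ψ : m → ℂ) :
    energy (A - B) ψ = energy A ψ - energy B ψ := by
  simp [energy, Matrix.sub_mulVec, dotProduct_sub]

lemma energy_smul_real (r : ℝ) (A : Matrix m m ℂ) (ψ : m → ℂ) :
    energy ((r : ℂ) • A) ψ = r * energy A ψ := by
  simp only [energy, Matrix.smul_mulVec, dotProduct_smul, smul_eq_mul,
    Complex.mul_re, Complex.ofReal_re, Complex.ofReal_im]
  ring

lemma energy_zero (ψ : m → ℂ) : energy (0 : Matrix m m ℂ) ψ = 0 := by
  simp [energy]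

lemma energy_sum {ι : Type*} (s : Finset ι) (F : ι → Matrix m m ℂ) (ψ : m → ℂ) :
    energy (∑ i ∈ s, F i) ψ = ∑ i ∈ s, energy (F i) ψ := by
  classical
  induction s using Finset.cons_induction with
  | empty => simp [energy_zero]
  | cons a s ha ih => rw [Finset.sum_cons, Finset.sum_cons, energy_add, ih]

lemma dot_self_re (ψ : m → ℂ) : (star ψ ⬝ᵥ ψ).re = ∑ x, ‖ψ x‖ ^ 2 := by
  simp only [dotProduct, Pi.star_apply, RCLike.star_def, Complex.re_sum]
  apply Finset.sum_congr rfl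
  intro x _
  have h : (starRingEnd ℂ) (ψ x) * ψ x = ((‖ψ x‖ ^ 2 : ℝ) : ℂ) := by
    rw [mul_comm, Complex.mul_conj]
    norm_cast
    simp [Complex.sq_norm]
  rw [h, Complex.ofReal_re]

lemma energy_one (ψ : m → ℂ) : energy (1 : Matrix m m ℂ) ψ = ∑ x, ‖ψ x‖ ^ 2 := by
  rw [energy, Matrix.one_mulVec, dot_self_re]

lemma energy_conj (U A : Matrix m m ℂ) (ψ : m → ℂ) :
    energy (U * A * Uᴴ) ψ = energy A (Uᴴ *ᵥ ψ) := by
  unfold energy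
  congr 1
  have h1 : star (Uᴴ *ᵥ ψ) = star ψ ᵥ* U := by
    rw [Matrix.star_mulVec, Matrix.conjTranspose_conjTranspose]
  rw [h1, ← Matrix.dotProduct_mulVec, Matrix.mulVec_mulVec, Matrix.mulVec_mulVec,
    Matrix.mul_assoc]

lemma norm_conj (U : Matrix m m ℂ) (hU : U * Uᴴ = 1) (ψ : m → ℂ) :
    ∑ x, ‖(Uᴴ *ᵥ ψ) x‖ ^ 2 = ∑ x, ‖ψ x‖ ^ 2 := by
  rw [← dot_self_re, ← dot_self_re]
  congr 1
  have h1 : star (Uᴴ *ᵥ ψ) = star ψ ᵥ* U := by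
    rw [Matrix.star_mulVec, Matrix.conjTranspose_conjTranspose]
  rw [h1, ← Matrix.dotProduct_mulVec, Matrix.mulVec_mulVec, hU, Matrix.one_mulVec]

lemma energy_sq (C : Matrix m m ℂ) (hC : Cᴴ = C) (ψ : m → ℂ) :
    energy (C * C) ψ = ∑ x, ‖(C *ᵥ ψ) x‖ ^ 2 := by
  rw [← dot_self_re]
  unfold energy
  congr 1
  rw [← Matrix.mulVec_mulVec, Matrix.star_mulVec, hC, Matrix.dotProduct_mulVec]

lemma dot_re_sq_le (ψ φ : m → ℂ) :
    ((star ψ ⬝ᵥ φ).re) ^ 2 ≤ (∑ x, ‖ψ x‖ ^ 2) * (∑ x, ‖φ x‖ ^ 2) := by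
  have h1 : ‖star ψ ⬝ᵥ φ‖ ≤ ∑ x, ‖ψ x‖ * ‖φ x‖ := by
    refine (norm_sum_le _ _).trans ?_
    apply Finset.sum_le_sum
    intro x _
    rw [norm_mul, Pi.star_apply, norm_star]
  have h2 : ((star ψ ⬝ᵥ φ).re) ^ 2 ≤ ‖star ψ ⬝ᵥ φ‖ ^ 2 := by
    set z := star ψ ⬝ᵥ φ
    have : ‖z‖ ^ 2 = z.re ^ 2 + z.im ^ 2 := by
      rw [Complex.sq_norm, Complex.normSq_apply]; ring
    nlinarith [sq_nonneg z.im]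
  have h3 : ‖star ψ ⬝ᵥ φ‖ ^ 2 ≤ (∑ x, ‖ψ x‖ * ‖φ x‖) ^ 2 :=
    pow_le_pow_left₀ (norm_nonneg _) h1 2
  have h4 : (∑ x, ‖ψ x‖ * ‖φ x‖) ^ 2 ≤ (∑ x, ‖ψ x‖ ^ 2) * (∑ x, ‖φ x‖ ^ 2) :=
    Finset.sum_mul_sq_le_sq_mul_sq _ _ _
  linarith

end QMC

namespace QMC

variable {m : Type} [Fintype m] [DecidableEq m]

lemma abs_energy_le (A : Matrix m m ℂ) (ψ : m → ℂ) (hψ : ∑ x, ‖ψ x‖ ^ 2 = 1) :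
    |energy A ψ| ≤ ∑ x, ∑ y, ‖A x y‖ := by
  have hb : ∀ x, ‖ψ x‖ ≤ 1 := by
    intro x
    have h1 : ‖ψ x‖ ^ 2 ≤ 1 := by
      rw [← hψ]
      exact Finset.single_le_sum (f := fun x => ‖ψ x‖ ^ 2)
        (fun y _ => sq_nonneg _) (Finset.mem_univ x)
    nlinarith [norm_nonneg (ψ x)]
  have h2 : |energy A ψ| ≤ ‖star ψ ⬝ᵥ A *ᵥ ψ‖ := by
    rw [energy]
    exact Complex.abs_re_le_norm _
  refine h2.trans ?_
  rw [inner_expand]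
  refine (norm_sum_le _ _).trans ?_
  refine Finset.sum_le_sum fun x _ => ?_
  refine (norm_sum_le _ _).trans ?_
  refine Finset.sum_le_sum fun y _ => ?_
  simp only [norm_mul, RCLike.norm_conj]
  have hax : (0 : ℝ) ≤ ‖A x y‖ := norm_nonneg (A x y)
  have hpx : (0 : ℝ) ≤ ‖ψ x‖ := norm_nonneg (ψ x)
  have hpy : (0 : ℝ) ≤ ‖ψ y‖ := norm_nonneg (ψ y)
  have s1 : ‖ψ x‖ * ‖A x y‖ ≤ ‖A x y‖ := by nlinarith [hb x]
  have s2 : ‖ψ x‖ * ‖A x y‖ * ‖ψ y‖ ≤ ‖A x y‖ * ‖ψ y‖ :=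
    mul_le_mul_of_nonneg_right s1 hpy
  have s3 : ‖A x y‖ * ‖ψ y‖ ≤ ‖A x y‖ := by nlinarith [hb y]
  linarith

lemma maxEig_le [Nonempty m] (A : Matrix m m ℂ) (c : ℝ)
    (h : ∀ ψ : m → ℂ, ∑ x, ‖ψ x‖ ^ 2 = 1 → energy A ψ ≤ c) : maxEig A ≤ c := by
  apply csSup_le
  · obtain ⟨x₀⟩ := ‹Nonempty m›
    refine ⟨energy A (Pi.single x₀ 1), Pi.single x₀ 1, ?_, rfl⟩
    have hx : ∀ x : m, ‖(Pi.single x₀ (1 : ℂ) : m → ℂ) x‖ ^ 2 = if x = x₀ then (1 : ℝ) else 0 := by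
      intro x
      by_cases h : x = x₀ <;> simp [Pi.single_apply, h]
    simp only [hx]
    simp
  · rintro r ⟨ψ, hψ, rfl⟩
    exact h ψ hψ

lemma prod_unit {n : ℕ} (f : Fin n → Fin 2 → ℂ) (hf : ∀ i, ∑ b, ‖f i b‖ ^ 2 = 1) :
    ∑ x : Fin n → Fin 2, ‖∏ i, f i (x i)‖ ^ 2 = 1 := by
  have h1 : ∀ x : Fin n → Fin 2, ‖∏ i, f i (x i)‖ ^ 2 = ∏ i, ‖f i (x i)‖ ^ 2 := by
    intro x
    rw [norm_prod, ← Finset.prod_pow]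
  simp only [h1]
  rw [← Fintype.piFinset_univ,
    ← Finset.prod_univ_sum (fun _ => Finset.univ) (fun i b => ‖f i b‖ ^ 2)]
  exact Finset.prod_eq_one fun i _ => hf i

lemma le_PROD (n : ℕ) (G : SimpleGraph (Fin n)) [DecidableRel G.Adj]
    (w : Fin n → Fin n → ℝ) (f : Fin n → Fin 2 → ℂ) (hf : ∀ i, ∑ b, ‖f i b‖ ^ 2 = 1) :
    energy (hamG n G w) (fun x => ∏ i, f i (x i)) ≤ PRODval n G w := by
  apply le_csSup
  · refine ⟨∑ x, ∑ y, ‖hamG n G w x y‖, ?_⟩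
    rintro r ⟨g, hg, rfl⟩
    exact (abs_le.mp (abs_energy_le _ _ (prod_unit g hg))).2
  · exact ⟨f, hf, rfl⟩

lemma OPT_le (n : ℕ) (G : SimpleGraph (Fin n)) [DecidableRel G.Adj]
    (w : Fin n → Fin n → ℝ) (c : ℝ)
    (h : ∀ ψ : (Fin n → Fin 2) → ℂ, ∑ x, ‖ψ x‖ ^ 2 = 1 → energy (hamG n G w) ψ ≤ c) :
    OPTval n G w ≤ c :=
  maxEig_le _ c h

end QMC

namespace QMC

variable {n : ℕ}

lemma tens_apply (f : Fin n → Matrix (Fin 2) (Fin 2) ℂ) (x y : Fin n → Fin 2) :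
    tens n f x y = ∏ i, f i (x i) (y i) := rfl

lemma pauliAt_mul_eq_tens2 {i j : Fin n} (hij : i ≠ j) (P Q : Matrix (Fin 2) (Fin 2) ℂ) :
    pauliAt n i P * pauliAt n j Q
      = tens n (Function.update (Function.update (fun _ => 1) i P) j Q) := by
  rw [pauliAt_eq_tens, pauliAt_eq_tens, tens_mul]
  apply congrArg (tens n)
  funext k
  simp only [Function.update_apply]
  by_cases h1 : k = i
  · subst h1; simp [hij]
  · by_cases h2 : k = j
    · subst h2; simp [h1]
    · simp [h1, h2]

lemma tens_update2_apply {i j : Fin n} (hij : i ≠ j) (P Q : Matrix (Fin 2) (Fin 2) ℂ)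
    (x y : Fin n → Fin 2) :
    tens n (Function.update (Function.update (fun _ => 1) i P) j Q) x y
      = P (x i) (y i) * Q (x j) (y j)
        * ∏ k ∈ (Finset.univ.erase j).erase i, (if x k = y k then (1 : ℂ) else 0) := by
  rw [tens_apply]
  rw [← Finset.prod_erase_mul Finset.univ _ (Finset.mem_univ j),
    ← Finset.prod_erase_mul (Finset.univ.erase j) _
      (Finset.mem_erase.mpr ⟨hij, Finset.mem_univ i⟩)]
  have hgj : (Function.update (Function.update (fun _ => (1 : Matrix (Fin 2) (Fin 2) ℂ)) i P) j Q) j = Q :=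
    Function.update_self _ _ _
  have hgi : (Function.update (Function.update (fun _ => (1 : Matrix (Fin 2) (Fin 2) ℂ)) i P) j Q) i = P := by
    rw [Function.update_of_ne hij, Function.update_self]
  rw [hgj, hgi]
  have hrest : ∏ k ∈ (Finset.univ.erase j).erase i,
      (Function.update (Function.update (fun _ => (1 : Matrix (Fin 2) (Fin 2) ℂ)) i P) j Q) k (x k) (y k)
        = ∏ k ∈ (Finset.univ.erase j).erase i, (if x k = y k then (1 : ℂ) else 0) := by
    refine Finset.prod_congr rfl fun k hk => ?_
    obtain ⟨hki, hkj'⟩ := Finset.mem_erase.mp hk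
    have hkj := (Finset.mem_erase.mp hkj').1
    rw [Function.update_of_ne hkj, Function.update_of_ne hki, Matrix.one_apply]
  rw [hrest]
  ring

lemma pauliAt_mul_apply_pair {i j : Fin n} (hij : i ≠ j) (P Q : Matrix (Fin 2) (Fin 2) ℂ)
    (x y : Fin n → Fin 2) :
    (pauliAt n i P * pauliAt n j Q) x y
      = P (x i) (y i) * Q (x j) (y j)
        * ∏ k ∈ (Finset.univ.erase j).erase i, (if x k = y k then (1 : ℂ) else 0) := by
  rw [pauliAt_mul_eq_tens2 hij, tens_update2_apply hij]

lemma pauliAt_mul_apply_diag {i j : Fin n} (hij : i ≠ j) (P Q : Matrix (Fin 2) (Fin 2) ℂ)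
    (x : Fin n → Fin 2) :
    (pauliAt n i P * pauliAt n j Q) x x = P (x i) (x i) * Q (x j) (x j) := by
  rw [pauliAt_mul_apply_pair hij]
  rw [Finset.prod_congr rfl (fun k _ => if_pos rfl), Finset.prod_const_one, mul_one]

lemma pauliAt_mul_apply_offdiag {i j : Fin n} (hij : i ≠ j)
    (P Q : Matrix (Fin 2) (Fin 2) ℂ)
    (hP : ∀ a b, a ≠ b → P a b = 0) (hQ : ∀ a b, a ≠ b → Q a b = 0)
    {x y : Fin n → Fin 2} (hxy : x ≠ y) :
    (pauliAt n i P * pauliAt n j Q) x y = 0 := by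
  rw [pauliAt_mul_apply_pair hij]
  obtain ⟨k, hk⟩ : ∃ k, x k ≠ y k := by
    by_contra hc; push_neg at hc; exact hxy (funext hc)
  by_cases hki : k = i
  · subst hki; rw [hP _ _ hk]; ring
  · by_cases hkj : k = j
    · subst hkj; rw [hQ _ _ hk]; ring
    · rw [Finset.prod_eq_zero
        (Finset.mem_erase.mpr ⟨hki, Finset.mem_erase.mpr ⟨hkj, Finset.mem_univ k⟩⟩)
        (by rw [if_neg hk] : (if x k = y k then (1:ℂ) else 0) = 0)]
      ring

/-! 2×2 Hadamard-type unitaries -/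

def cinv : ℂ := ((Real.sqrt 2 : ℝ) : ℂ)⁻¹

lemma cinv_sq : cinv ^ 2 * 2 = 1 := by
  have h : ((Real.sqrt 2 : ℝ) : ℂ) ^ 2 = 2 := by
    norm_cast
    rw [Real.sq_sqrt (by norm_num : (0:ℝ) ≤ 2)]
  rw [cinv, inv_pow, h]
  norm_num

lemma star_cinv : star cinv = cinv := by
  simp [cinv, Complex.star_def, Complex.conj_ofReal]

def hd0 : Matrix (Fin 2) (Fin 2) ℂ := !![1, 1; 1, -1]
def Hd : Matrix (Fin 2) (Fin 2) ℂ := cinv • hd0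

def uy0 : Matrix (Fin 2) (Fin 2) ℂ := !![1, 1; Complex.I, -Complex.I]
def UY2 : Matrix (Fin 2) (Fin 2) ℂ := cinv • uy0

lemma hd0_herm : hd0ᴴ = hd0 := by
  ext i j; fin_cases i <;> fin_cases j <;> simp [hd0, Matrix.conjTranspose_apply]

lemma Hd_herm : Hdᴴ = Hd := by
  rw [Hd, Matrix.conjTranspose_smul, hd0_herm, star_cinv]

lemma Hd_mul_Hd : Hd * Hd = 1 := by
  rw [Hd, smul_mul_smul_comm]
  have h : hd0 * hd0 = (2 : ℂ) • 1 := by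
    ext i j
    fin_cases i <;> fin_cases j <;>
      simp [hd0, Matrix.mul_apply, Fin.sum_univ_two, Matrix.one_apply] <;> ring
  rw [h, smul_smul, ← sq, cinv_sq, one_smul]

lemma Hd_conj_one : Hd * 1 * Hdᴴ = 1 := by
  rw [Matrix.mul_one, Hd_herm, Hd_mul_Hd]

lemma Hd_conj_PZ : Hd * PZ * Hdᴴ = PX := by
  rw [Hd_herm, Hd, Matrix.smul_mul, Matrix.smul_mul, Matrix.mul_smul, smul_smul, ← sq]
  have h : hd0 * PZ * hd0 = (2 : ℂ) • PX := by
    ext i j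
    fin_cases i <;> fin_cases j <;>
      simp [hd0, PZ, PX, Matrix.mul_apply, Fin.sum_univ_two] <;> ring
  rw [h, smul_smul, cinv_sq, one_smul]

lemma UY2_mul_conj : UY2 * UY2ᴴ = 1 := by
  rw [UY2, Matrix.conjTranspose_smul, star_cinv, smul_mul_smul_comm]
  have h : uy0 * uy0ᴴ = (2 : ℂ) • 1 := by
    ext i j
    fin_cases i <;> fin_cases j <;>
      simp [uy0, Matrix.mul_apply, Fin.sum_univ_two, Matrix.one_apply,
        Matrix.conjTranspose_apply] <;> ring
  rw [h, smul_smul, ← sq, cinv_sq, one_smul]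

lemma UY2_conj_one : UY2 * 1 * UY2ᴴ = 1 := by
  rw [Matrix.mul_one, UY2_mul_conj]

lemma UY2_conj_PZ : UY2 * PZ * UY2ᴴ = PY := by
  rw [UY2, Matrix.conjTranspose_smul, star_cinv, Matrix.smul_mul, Matrix.smul_mul,
    Matrix.mul_smul, smul_smul, ← sq]
  have h : uy0 * PZ * uy0ᴴ = (2 : ℂ) • PY := by
    ext i j
    fin_cases i <;> fin_cases j <;>
      simp [uy0, PZ, PY, Matrix.mul_apply, Fin.sum_univ_two,
        Matrix.conjTranspose_apply] <;> ring
  rw [h, smul_smul, cinv_sq, one_smul]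

end QMC

namespace QMC

lemma energy_half {m : Type} [Fintype m] [DecidableEq m] (A : Matrix m m ℂ) (ψ : m → ℂ) :
    energy ((1/2 : ℂ) • A) ψ = (1/2) * energy A ψ := by
  have h : ((1/2 : ℝ) : ℂ) = (1/2 : ℂ) := by norm_num
  rw [← h, energy_smul_real]

lemma energy_ite {m : Type} [Fintype m] [DecidableEq m] (c : Prop) [Decidable c]
    (A : Matrix m m ℂ) (ψ : m → ℂ) :
    energy (if c then A else 0) ψ = if c then energy A ψ else 0 := by
  by_cases h : c <;> simp [h, energy_zero]

lemma energy_ofReal_smul {m : Type} [Fintype m] [DecidableEq m] (r : ℝ) (A : Matrix m m ℂ)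
    (ψ : m → ℂ) : energy ((r : ℂ) • A) ψ = r * energy A ψ :=
  energy_smul_real r A ψ

lemma energy_of_diag_entries {m : Type} [Fintype m] [DecidableEq m]
    (A : Matrix m m ℂ) (d : m → ℝ) (h : ∀ x y, A x y = if x = y then (d x : ℂ) else 0)
    (ψ : m → ℂ) : energy A ψ = ∑ x, d x * ‖ψ x‖ ^ 2 := by
  rw [energy, inner_expand]
  have hx : ∀ x : m, ∑ y, (starRingEnd ℂ) (ψ x) * A x y * ψ y
      = (d x : ℂ) * ((starRingEnd ℂ) (ψ x) * ψ x) := by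
    intro x
    rw [Finset.sum_eq_single x]
    · rw [h x x, if_pos rfl]; ring
    · intro y _ hyx
      rw [h x y, if_neg (Ne.symm hyx)]; ring
    · intro hx'; exact absurd (Finset.mem_univ x) hx'
  simp only [hx]
  rw [Complex.re_sum]
  refine Finset.sum_congr rfl fun x _ => ?_
  have h1 : (starRingEnd ℂ) (ψ x) * ψ x = ((‖ψ x‖ ^ 2 : ℝ) : ℂ) := by
    rw [mul_comm, Complex.mul_conj]
    norm_cast
    simp [Complex.sq_norm]
  rw [h1, ← Complex.ofReal_mul, Complex.ofReal_re]

lemma energy_single {m : Type} [Fintype m] [DecidableEq m] (A : Matrix m m ℂ) (z : m) :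
    energy A (Pi.single z (1 : ℂ)) = (A z z).re := by
  rw [energy]
  congr 1
  have hstar : star (Pi.single z (1 : ℂ) : m → ℂ) = Pi.single z 1 := by
    funext x
    simp only [Pi.star_apply, Pi.single_apply]
    by_cases h : x = z <;> simp [h]
  rw [hstar, Matrix.mulVec_single, single_dotProduct]
  simp

section PartII

variable (n : ℕ) (G : SimpleGraph (Fin n)) [DecidableRel G.Adj] (w : Fin n → Fin n → ℝ)

/-- The value of the cut given by the assignment `z`. -/
def cutval (z : Fin n → Fin 2) : ℝ :=
  (1 / 2) * ∑ i, ∑ j, if G.Adj i j then (if z i = z j then 0 else w i j) else 0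

/-- The classical MaxCut value. -/
def Mcut : ℝ := Finset.univ.sup' Finset.univ_nonempty (cutval n G w)

lemma cutval_le_Mcut (z : Fin n → Fin 2) : cutval n G w z ≤ Mcut n G w :=
  Finset.le_sup' _ (Finset.mem_univ z)

lemma exists_Mcut : ∃ z, Mcut n G w = cutval n G w z := by
  obtain ⟨z, _, hz⟩ := Finset.exists_mem_eq_sup' Finset.univ_nonempty (cutval n G w)
  exact ⟨z, hz⟩

/-- The `P`-part Hamiltonian `(1/2)·Σ w_{ij} (1/2)(1 − P_i P_j)`. -/
def hamP (P : Matrix (Fin 2) (Fin 2) ℂ) : Matrix (Fin n → Fin 2) (Fin n → Fin 2) ℂ :=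
  (1 / 2 : ℂ) • ∑ i, ∑ j, if G.Adj i j then
    (w i j : ℂ) • ((1 / 2 : ℂ) • (1 - pauliAt n i P * pauliAt n j P)) else 0

lemma energy_hamP (P : Matrix (Fin 2) (Fin 2) ℂ) (ψ : (Fin n → Fin 2) → ℂ) :
    energy (hamP n G w P) ψ = (1/2) * ∑ i, ∑ j, (if G.Adj i j then
      w i j * ((1/2) * (energy 1 ψ - energy (pauliAt n i P * pauliAt n j P) ψ)) else 0) := by
  unfold hamP
  rw [energy_half, energy_sum]
  congr 1
  refine Finset.sum_congr rfl fun i _ => ?_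
  rw [energy_sum]
  refine Finset.sum_congr rfl fun j _ => ?_
  rw [energy_ite]
  by_cases h : G.Adj i j
  · rw [if_pos h, if_pos h, energy_ofReal_smul, energy_half, energy_sub]
  · rw [if_neg h, if_neg h]

lemma energy_hamG_expand (ψ : (Fin n → Fin 2) → ℂ) :
    energy (hamG n G w) ψ = (1/2) * ∑ i, ∑ j, (if G.Adj i j then
      w i j * ((1/2) * (energy 1 ψ
        - energy (pauliAt n i PX * pauliAt n j PX) ψ
        - energy (pauliAt n i PY * pauliAt n j PY) ψ
        - energy (pauliAt n i PZ * pauliAt n j PZ) ψ)) else 0) := by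
  unfold hamG
  rw [energy_half, energy_sum]
  congr 1
  refine Finset.sum_congr rfl fun i _ => ?_
  rw [energy_sum]
  refine Finset.sum_congr rfl fun j _ => ?_
  rw [energy_ite]
  by_cases h : G.Adj i j
  · rw [if_pos h, if_pos h, energy_ofReal_smul]
    unfold hTerm
    rw [energy_half, energy_sub, energy_sub, energy_sub]
  · rw [if_neg h, if_neg h]

lemma energy_three_hamP (ψ : (Fin n → Fin 2) → ℂ) :
    energy (hamP n G w PX) ψ + energy (hamP n G w PY) ψ + energy (hamP n G w PZ) ψ
      = energy (hamG n G w) ψ + totalW n G w * energy 1 ψ := by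
  rw [energy_hamP, energy_hamP, energy_hamP, energy_hamG_expand, totalW]
  set e1 := energy 1 ψ
  set eX := fun i j => energy (pauliAt n i PX * pauliAt n j PX) ψ
  set eY := fun i j => energy (pauliAt n i PY * pauliAt n j PY) ψ
  set eZ := fun i j => energy (pauliAt n i PZ * pauliAt n j PZ) ψ
  have key : ∀ i j : Fin n,
      (if G.Adj i j then w i j * ((1/2) * (e1 - eX i j)) else 0)
      + (if G.Adj i j then w i j * ((1/2) * (e1 - eY i j)) else 0)
      + (if G.Adj i j then w i j * ((1/2) * (e1 - eZ i j)) else 0)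
      = (if G.Adj i j then w i j * ((1/2) * (e1 - eX i j - eY i j - eZ i j)) else 0)
        + (if G.Adj i j then w i j else 0) * e1 := by
    intro i j
    by_cases h : G.Adj i j
    · simp only [if_pos h]; ring
    · simp only [if_neg h]; ring
  have hs : ∀ (f g : Fin n → Fin n → ℝ),
      (∑ i, ∑ j, (f i j + g i j)) = (∑ i, ∑ j, f i j) + ∑ i, ∑ j, g i j := by
    intro f g
    rw [← Finset.sum_add_distrib]
    exact Finset.sum_congr rfl fun i _ => Finset.sum_add_distrib
  have hkey : (∑ i, ∑ j, ((if G.Adj i j then w i j * ((1/2) * (e1 - eX i j)) else 0)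
      + (if G.Adj i j then w i j * ((1/2) * (e1 - eY i j)) else 0)
      + (if G.Adj i j then w i j * ((1/2) * (e1 - eZ i j)) else 0)))
      = (∑ i, ∑ j, (if G.Adj i j then w i j * ((1/2) * (e1 - eX i j - eY i j - eZ i j)) else 0))
        + (∑ i, ∑ j, (if G.Adj i j then w i j else 0)) * e1 := by
    simp only [key]
    rw [hs]
    congr 1
    rw [Finset.sum_mul]
    exact Finset.sum_congr rfl fun i _ => (Finset.sum_mul _ _ _).symm
  have hL : (1/2 : ℝ) * (∑ i, ∑ j, (if G.Adj i j then w i j * ((1/2) * (e1 - eX i j)) else 0))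
      + (1/2) * (∑ i, ∑ j, (if G.Adj i j then w i j * ((1/2) * (e1 - eY i j)) else 0))
      + (1/2) * (∑ i, ∑ j, (if G.Adj i j then w i j * ((1/2) * (e1 - eZ i j)) else 0))
      = (1/2) * ∑ i, ∑ j, ((if G.Adj i j then w i j * ((1/2) * (e1 - eX i j)) else 0)
        + (if G.Adj i j then w i j * ((1/2) * (e1 - eY i j)) else 0)
        + (if G.Adj i j then w i j * ((1/2) * (e1 - eZ i j)) else 0)) := by
    rw [hs, hs]
    ring
  rw [hL, hkey]
  ring

end PartII

end QMC

namespace QMC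

lemma PZ_diag0 : ∀ a b : Fin 2, a ≠ b → PZ a b = 0 := by
  intro a b h; fin_cases a <;> fin_cases b <;> simp_all [PZ]

lemma one2_diag0 : ∀ a b : Fin 2, a ≠ b → (1 : Matrix (Fin 2) (Fin 2) ℂ) a b = 0 := by
  intro a b h; exact Matrix.one_apply_ne h

lemma szz (b c : Fin 2) : (1/2 : ℂ) * (1 - PZ b b * PZ c c) = if b = c then 0 else 1 := by
  fin_cases b <;> fin_cases c <;> norm_num [PZ]

lemma sfull (b c : Fin 2) :
    (1/2 : ℂ) * (1 - PX b b * PX c c - PY b b * PY c c - PZ b b * PZ c c)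
      = if b = c then 0 else 1 := by
  fin_cases b <;> fin_cases c <;> norm_num [PX, PY, PZ]

section PartII2

variable (n : ℕ) (G : SimpleGraph (Fin n)) [DecidableRel G.Adj] (w : Fin n → Fin n → ℝ)

lemma cutval_cast (x : Fin n → Fin 2) :
    ((cutval n G w x : ℝ) : ℂ)
      = (1/2 : ℂ) * ∑ i, ∑ j, (if G.Adj i j then
          (if x i = x j then 0 else ((w i j : ℝ) : ℂ)) else 0) := by
  rw [cutval]
  push_cast
  congr 1
  refine Finset.sum_congr rfl fun i _ => ?_
  push_cast
  refine Finset.sum_congr rfl fun j _ => ?_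
  by_cases h : G.Adj i j
  · rw [if_pos h, if_pos h]
    by_cases h2 : x i = x j <;> simp [h2]
  · simp [h]

lemma hamP_PZ_apply (x y : Fin n → Fin 2) :
    hamP n G w PZ x y = if x = y then ((cutval n G w x : ℝ) : ℂ) else 0 := by
  unfold hamP
  rw [Matrix.smul_apply, Matrix.sum_apply]
  by_cases hxy : x = y
  · subst hxy
    rw [if_pos rfl, cutval_cast, smul_eq_mul]
    congr 1
    refine Finset.sum_congr rfl fun i _ => ?_
    rw [Matrix.sum_apply]
    refine Finset.sum_congr rfl fun j _ => ?_
    rw [apply_ite (fun M : Matrix (Fin n → Fin 2) (Fin n → Fin 2) ℂ => M x x)]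
    by_cases h : G.Adj i j
    · rw [if_pos h, if_pos h, Matrix.smul_apply, Matrix.smul_apply, Matrix.sub_apply,
        Matrix.one_apply_eq, pauliAt_mul_apply_diag (G.ne_of_adj h)]
      rw [smul_eq_mul, smul_eq_mul, szz]
      by_cases h2 : x i = x j <;> simp [h2]
    · rw [if_neg h, if_neg h, Matrix.zero_apply]
  · rw [if_neg hxy]
    have hterm : ∀ i j : Fin n,
        (if G.Adj i j then (w i j : ℂ) • ((1/2 : ℂ) • (1 - pauliAt n i PZ * pauliAt n j PZ)) else 0) x y = 0 := by
      intro i j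
      rw [apply_ite (fun M : Matrix (Fin n → Fin 2) (Fin n → Fin 2) ℂ => M x y)]
      by_cases h : G.Adj i j
      · rw [if_pos h, Matrix.smul_apply, Matrix.smul_apply, Matrix.sub_apply,
          Matrix.one_apply_ne hxy,
          pauliAt_mul_apply_offdiag (G.ne_of_adj h) PZ PZ PZ_diag0 PZ_diag0 hxy]
        simp
      · rw [if_neg h, Matrix.zero_apply]
    have : ∀ i : Fin n, (∑ j, if G.Adj i j then (w i j : ℂ) • ((1/2 : ℂ) • (1 - pauliAt n i PZ * pauliAt n j PZ)) else 0) x y = 0 := by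
      intro i
      rw [Matrix.sum_apply]
      exact Finset.sum_eq_zero fun j _ => hterm i j
    rw [Finset.sum_congr rfl fun i _ => this i, Finset.sum_const_zero, smul_zero]

lemma energy_hamP_PZ_le (ψ : (Fin n → Fin 2) → ℂ) (hψ : ∑ x, ‖ψ x‖ ^ 2 = 1) :
    energy (hamP n G w PZ) ψ ≤ Mcut n G w := by
  rw [energy_of_diag_entries _ (cutval n G w) (hamP_PZ_apply n G w) ψ]
  calc ∑ x, cutval n G w x * ‖ψ x‖ ^ 2
      ≤ ∑ x, Mcut n G w * ‖ψ x‖ ^ 2 :=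
        Finset.sum_le_sum fun x _ =>
          mul_le_mul_of_nonneg_right (cutval_le_Mcut n G w x) (sq_nonneg _)
    _ = Mcut n G w := by rw [← Finset.mul_sum, hψ, mul_one]

/-! Conjugation by local unitaries -/

lemma tensU_mul_conj (u : Matrix (Fin 2) (Fin 2) ℂ) (huc : u * uᴴ = 1) :
    (tens n fun _ => u) * (tens n fun _ => u)ᴴ = 1 := by
  rw [tens_conjTranspose, tens_mul]
  rw [show (fun i : Fin n => u * uᴴ) = fun _ => (1 : Matrix (Fin 2) (Fin 2) ℂ) from
    funext fun _ => huc, tens_one]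

lemma conj_mul_split (U A B : Matrix (Fin n → Fin 2) (Fin n → Fin 2) ℂ)
    (h : Uᴴ * U = 1) : U * (A * B) * Uᴴ = (U * A * Uᴴ) * (U * B * Uᴴ) := by
  have h2 : ∀ X : Matrix (Fin n → Fin 2) (Fin n → Fin 2) ℂ, Uᴴ * (U * X) = X := by
    intro X; rw [← Matrix.mul_assoc, h, Matrix.one_mul]
  simp only [Matrix.mul_assoc]
  rw [h2]

lemma tensU_conj_pauliAt (u : Matrix (Fin 2) (Fin 2) ℂ) (huc : u * uᴴ = 1)
    (i : Fin n) (P : Matrix (Fin 2) (Fin 2) ℂ) :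
    (tens n fun _ => u) * pauliAt n i P * (tens n fun _ => u)ᴴ = pauliAt n i (u * P * uᴴ) := by
  rw [tens_conjTranspose, pauliAt_eq_tens, pauliAt_eq_tens, tens_mul, tens_mul]
  apply congrArg (tens n)
  funext k
  by_cases h : k = i
  · subst h; simp [Function.update_self, Matrix.mul_assoc]
  · simp only [Function.update_of_ne h]
    rw [Matrix.mul_one, huc]

lemma conjU_hamP (u : Matrix (Fin 2) (Fin 2) ℂ) (huc : u * uᴴ = 1) (hcu : uᴴ * u = 1)
    (P : Matrix (Fin 2) (Fin 2) ℂ) (hP : u * PZ * uᴴ = P) :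
    (tens n fun _ => u) * hamP n G w PZ * (tens n fun _ => u)ᴴ = hamP n G w P := by
  set U := tens n fun _ => u with hU
  have hUU : Uᴴ * U = 1 := by
    rw [hU, tens_conjTranspose, tens_mul]
    rw [show (fun i : Fin n => uᴴ * u) = fun _ => (1 : Matrix (Fin 2) (Fin 2) ℂ) from
      funext fun _ => hcu, tens_one]
  have hUUc : U * Uᴴ = 1 := tensU_mul_conj n u huc
  unfold hamP
  rw [Matrix.mul_smul, Matrix.smul_mul]
  congr 1
  rw [Finset.mul_sum, Finset.sum_mul]
  refine Finset.sum_congr rfl fun i _ => ?_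
  rw [Finset.mul_sum, Finset.sum_mul]
  refine Finset.sum_congr rfl fun j _ => ?_
  by_cases h : G.Adj i j
  · rw [if_pos h, if_pos h, Matrix.mul_smul, Matrix.smul_mul, Matrix.mul_smul, Matrix.smul_mul]
    congr 2
    rw [Matrix.mul_sub, Matrix.sub_mul, Matrix.mul_one, hUUc,
      conj_mul_split n U _ _ hUU,
      tensU_conj_pauliAt n u huc i PZ, tensU_conj_pauliAt n u huc j PZ, hP]
  · rw [if_neg h, if_neg h, Matrix.mul_zero, Matrix.zero_mul]

lemma energy_hamP_le_Mcut (u P : Matrix (Fin 2) (Fin 2) ℂ) (huc : u * uᴴ = 1)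
    (hcu : uᴴ * u = 1) (hP : u * PZ * uᴴ = P)
    (ψ : (Fin n → Fin 2) → ℂ) (hψ : ∑ x, ‖ψ x‖ ^ 2 = 1) :
    energy (hamP n G w P) ψ ≤ Mcut n G w := by
  rw [← conjU_hamP n G w u huc hcu P hP, energy_conj]
  exact energy_hamP_PZ_le n G w _
    ((norm_conj _ (tensU_mul_conj n u huc) ψ).trans hψ)

lemma OPT_le_3M : OPTval n G w ≤ 3 * Mcut n G w - totalW n G w := by
  apply OPT_le
  intro ψ hψ
  have h3 := energy_three_hamP n G w ψ
  rw [energy_one, hψ, mul_one] at h3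
  have hZ : energy (hamP n G w PZ) ψ ≤ Mcut n G w := by
    refine energy_hamP_le_Mcut n G w 1 PZ ?_ ?_ ?_ ψ hψ
    · rw [Matrix.conjTranspose_one, Matrix.one_mul]
    · rw [Matrix.conjTranspose_one, Matrix.one_mul]
    · rw [Matrix.conjTranspose_one, Matrix.one_mul, Matrix.mul_one]
  have hX : energy (hamP n G w PX) ψ ≤ Mcut n G w :=
    energy_hamP_le_Mcut n G w Hd PX
      (by rw [Hd_herm, Hd_mul_Hd]) (by rw [Hd_herm, Hd_mul_Hd]) Hd_conj_PZ ψ hψ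
  have hY : energy (hamP n G w PY) ψ ≤ Mcut n G w := by
    refine energy_hamP_le_Mcut n G w UY2 PY UY2_mul_conj ?_ UY2_conj_PZ ψ hψ
    have h := UY2_mul_conj
    -- uᴴu = 1 from uuᴴ = 1 for square matrices
    exact mul_eq_one_comm.mp h
  linarith

lemma Mcut_le_PROD : Mcut n G w ≤ PRODval n G w := by
  obtain ⟨z, hz⟩ := exists_Mcut n G w
  set f : Fin n → Fin 2 → ℂ := fun i b => if b = z i then 1 else 0 with hfdef
  have hf : ∀ i, ∑ b, ‖f i b‖ ^ 2 = 1 := by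
    intro i
    have h : ∀ c : Fin 2, ∑ b : Fin 2, ‖(if b = c then (1 : ℂ) else 0)‖ ^ 2 = 1 := by
      intro c; fin_cases c <;> simp [Fin.sum_univ_two]
    exact h (z i)
  have hvec : (fun x : Fin n → Fin 2 => ∏ i, f i (x i)) = Pi.single z (1 : ℂ) := by
    funext x
    by_cases h : x = z
    · subst h
      rw [Pi.single_apply, if_pos rfl]
      exact Finset.prod_eq_one fun i _ => if_pos rfl
    · rw [Pi.single_apply, if_neg h]
      obtain ⟨i, hi⟩ : ∃ i, x i ≠ z i := by
        by_contra hc; push_neg at hc; exact h (funext hc)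
      exact Finset.prod_eq_zero (Finset.mem_univ i) (if_neg hi)
  have he := le_PROD n G w f hf
  rw [hvec, energy_single] at he
  have hzz : hamG n G w z z = ((cutval n G w z : ℝ) : ℂ) := by
    unfold hamG
    rw [Matrix.smul_apply, Matrix.sum_apply, cutval_cast, smul_eq_mul]
    congr 1
    refine Finset.sum_congr rfl fun i _ => ?_
    rw [Matrix.sum_apply]
    refine Finset.sum_congr rfl fun j _ => ?_
    rw [apply_ite (fun M : Matrix (Fin n → Fin 2) (Fin n → Fin 2) ℂ => M z z)]
    by_cases h : G.Adj i j
    · rw [if_pos h, if_pos h, Matrix.smul_apply]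
      unfold hTerm
      rw [Matrix.smul_apply, Matrix.sub_apply, Matrix.sub_apply, Matrix.sub_apply,
        Matrix.one_apply_eq, pauliAt_mul_apply_diag (G.ne_of_adj h),
        pauliAt_mul_apply_diag (G.ne_of_adj h), pauliAt_mul_apply_diag (G.ne_of_adj h),
        smul_eq_mul, smul_eq_mul, sfull]
      by_cases h2 : z i = z j <;> simp [h2]
    · rw [if_neg h, if_neg h, Matrix.zero_apply]
  rw [hzz, Complex.ofReal_re] at he
  rw [hz]
  exact he

end PartII2

end QMC

namespace QMC

lemma sigma0 : σp 0 = PX := rfl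
lemma sigma1 : σp 1 = PY := rfl
lemma sigma2 : σp 2 = PZ := rfl

lemma sigma_anti {a b : Fin 3} (hab : a ≠ b) : σp a * σp b + σp b * σp a = 0 := by
  fin_cases a <;> fin_cases b <;> simp_all [sigma0, sigma1, sigma2] <;>
    first
      | (rw [PX_mul_PY, PY_mul_PX]; module)
      | (rw [PX_mul_PZ, PZ_mul_PX]; module)
      | (rw [PY_mul_PZ, PZ_mul_PY]; module)

variable {n : ℕ}

lemma pauliAt_anti {v : Fin n} (a b : Fin 3) :
    pauliAt n v (σp a) * pauliAt n v (σp b) + pauliAt n v (σp b) * pauliAt n v (σp a)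
      = if a = b then (2 : ℂ) • 1 else 0 := by
  rw [pauliAt_mul_same, pauliAt_mul_same, ← pauliAt_add]
  by_cases h : a = b
  · subst h
    rw [if_pos rfl]
    have : σp a * σp a + σp a * σp a = (2 : ℂ) • 1 := by rw [sigma_sq]; module
    rw [this, pauliAt_smul, pauliAt_one]
  · rw [if_neg h, sigma_anti h, pauliAt_zero]

lemma pauliAt_pair_herm {v j : Fin n} (hvj : v ≠ j) (a : Fin 3) :
    (pauliAt n v (σp a) * pauliAt n j (σp a))ᴴ = pauliAt n v (σp a) * pauliAt n j (σp a) := by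
  rw [Matrix.conjTranspose_mul, pauliAt_conjTranspose, pauliAt_conjTranspose,
    sigma_herm, pauliAt_mul_comm (Ne.symm hvj)]

/-- The 9-term Pauli product sum identity on two distinct sites. -/
lemma pair9 {v j : Fin n} (hvj : v ≠ j) :
    ∑ a : Fin 3, ∑ b : Fin 3,
        (pauliAt n v (σp a) * pauliAt n v (σp b)) * (pauliAt n j (σp a) * pauliAt n j (σp b))
      = (3 : ℂ) • 1 - (2 : ℂ) • (∑ c : Fin 3, pauliAt n v (σp c) * pauliAt n j (σp c)) := by
  simp only [pauliAt_mul_same]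
  rw [Fin.sum_univ_three]
  rw [Fin.sum_univ_three, Fin.sum_univ_three, Fin.sum_univ_three, Fin.sum_univ_three]
  simp only [sigma0, sigma1, sigma2]
  rw [PX_sq, PY_sq, PZ_sq, PX_mul_PY, PY_mul_PX, PX_mul_PZ, PZ_mul_PX, PY_mul_PZ, PZ_mul_PY]
  simp only [pauliAt_smul, pauliAt_one, smul_mul_smul_comm, Matrix.one_mul]
  have hII : Complex.I * Complex.I = -1 := Complex.I_mul_I
  have hII2 : -Complex.I * -Complex.I = -1 := by rw [neg_mul_neg, Complex.I_mul_I]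
  rw [hII, hII2]
  module

end QMC

namespace QMC

variable {n : ℕ}

/-- Sum of same-Pauli products at two sites. -/
def gam (n : ℕ) (j k : Fin n) : Matrix (Fin n → Fin 2) (Fin n → Fin 2) ℂ :=
  ∑ a : Fin 3, pauliAt n j (σp a) * pauliAt n k (σp a)

/-- The coordinate-swap permutation matrix. -/
def swpM (n : ℕ) (j k : Fin n) : Matrix (Fin n → Fin 2) (Fin n → Fin 2) ℂ :=
  fun x y => if y = x ∘ (Equiv.swap j k) then 1 else 0

lemma eq_indicator {j k : Fin n} (hjk : j ≠ k) (x y : Fin n → Fin 2) :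
    (if x = y then (1 : ℂ) else 0)
      = (if x j = y j then 1 else 0) * (if x k = y k then 1 else 0)
        * ∏ i ∈ (Finset.univ.erase k).erase j, (if x i = y i then (1 : ℂ) else 0) := by
  by_cases h : x = y
  · subst h
    rw [if_pos rfl, if_pos rfl, if_pos rfl,
      Finset.prod_congr rfl (fun i _ => if_pos rfl), Finset.prod_const_one]
    ring
  · rw [if_neg h]
    obtain ⟨i, hi⟩ : ∃ i, x i ≠ y i := by
      by_contra hc; push_neg at hc; exact h (funext hc)
    by_cases h1 : i = j
    · subst h1; rw [if_neg hi]; ring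
    · by_cases h2 : i = k
      · subst h2; rw [if_neg hi]; ring
      · rw [Finset.prod_eq_zero
          (Finset.mem_erase.mpr ⟨h1, Finset.mem_erase.mpr ⟨h2, Finset.mem_univ i⟩⟩)
          (if_neg hi : (if x i = y i then (1:ℂ) else 0) = 0)]
        ring

lemma swap_indicator {j k : Fin n} (hjk : j ≠ k) (x y : Fin n → Fin 2) :
    (if y = x ∘ (Equiv.swap j k) then (1 : ℂ) else 0)
      = (if y j = x k then 1 else 0) * (if y k = x j then 1 else 0)
        * ∏ i ∈ (Finset.univ.erase k).erase j, (if x i = y i then (1 : ℂ) else 0) := by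
  by_cases h1 : y j = x k
  · by_cases h2 : y k = x j
    · rw [if_pos h1, if_pos h2, one_mul, one_mul]
      by_cases h3 : ∀ i ∈ (Finset.univ.erase k).erase j, x i = y i
      · rw [if_pos, Finset.prod_congr rfl (fun i hi => if_pos (h3 i hi)),
          Finset.prod_const_one]
        funext i
        by_cases hij : i = j
        · subst hij; rw [Function.comp_apply, Equiv.swap_apply_left]; exact h1
        · by_cases hik : i = k
          · subst hik; rw [Function.comp_apply, Equiv.swap_apply_right]; exact h2
          · rw [Function.comp_apply, Equiv.swap_apply_of_ne_of_ne hij hik]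
            exact (h3 i (Finset.mem_erase.mpr ⟨hij,
              Finset.mem_erase.mpr ⟨hik, Finset.mem_univ i⟩⟩)).symm
      · push_neg at h3
        obtain ⟨i, hi, hne⟩ := h3
        have hij : i ≠ j := (Finset.mem_erase.mp hi).1
        have hik : i ≠ k := (Finset.mem_erase.mp (Finset.mem_erase.mp hi).2).1
        have hnc : ¬ y = x ∘ (Equiv.swap j k) := by
          intro he
          apply hne
          have := congrFun he i
          rw [Function.comp_apply, Equiv.swap_apply_of_ne_of_ne hij hik] at this
          exact this.symm
        rw [if_neg hnc, Finset.prod_eq_zero hi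
          (if_neg hne : (if x i = y i then (1:ℂ) else 0) = 0)]
    · rw [if_neg h2, if_neg]
      · ring
      · intro he
        apply h2
        have := congrFun he k
        rw [Function.comp_apply, Equiv.swap_apply_right] at this
        exact this
  · rw [if_neg h1, if_neg]
    · ring
    · intro he
      apply h1
      have := congrFun he j
      rw [Function.comp_apply, Equiv.swap_apply_left] at this
      exact this

lemma gam_eq_swp {j k : Fin n} (hjk : j ≠ k) :
    gam n j k = (2 : ℂ) • swpM n j k - 1 := by
  ext x y
  rw [Matrix.sub_apply, Matrix.smul_apply, Matrix.one_apply]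
  unfold gam swpM
  rw [Matrix.sum_apply, Fin.sum_univ_three]
  simp only [sigma0, sigma1, sigma2]
  rw [pauliAt_mul_apply_pair hjk, pauliAt_mul_apply_pair hjk, pauliAt_mul_apply_pair hjk]
  set Pδ := ∏ i ∈ (Finset.univ.erase k).erase j, (if x i = y i then (1 : ℂ) else 0) with hPδ
  have key : PX (x j) (y j) * PX (x k) (y k) * Pδ + PY (x j) (y j) * PY (x k) (y k) * Pδ
      + PZ (x j) (y j) * PZ (x k) (y k) * Pδ
      = (PX (x j) (y j) * PX (x k) (y k) + PY (x j) (y j) * PY (x k) (y k)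
        + PZ (x j) (y j) * PZ (x k) (y k)) * Pδ := by ring
  rw [key, sigma_swap_entry]
  rw [smul_eq_mul]
  rw [swap_indicator hjk x y, eq_indicator hjk x y]
  ring

lemma swpM_mulVec (j k : Fin n) (ψ : (Fin n → Fin 2) → ℂ) :
    swpM n j k *ᵥ ψ = fun x => ψ (x ∘ (Equiv.swap j k)) := by
  funext x
  rw [Matrix.mulVec]
  unfold swpM
  rw [dotProduct]
  rw [Finset.sum_eq_single (x ∘ (Equiv.swap j k))]
  · rw [if_pos rfl, one_mul]
  · intro y _ hy; rw [if_neg hy, zero_mul]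
  · intro h; exact absurd (Finset.mem_univ _) h

lemma sum_comp_swap (j k : Fin n) (g : (Fin n → Fin 2) → ℝ) :
    ∑ x : Fin n → Fin 2, g (x ∘ (Equiv.swap j k)) = ∑ x, g x := by
  apply Fintype.sum_equiv ((Equiv.swap j k).arrowCongr (Equiv.refl (Fin 2)))
  intro x
  have he : ((Equiv.swap j k).arrowCongr (Equiv.refl (Fin 2))) x = x ∘ (Equiv.swap j k) := by
    funext i
    simp [Equiv.arrowCongr]
  rw [he]

lemma energy_swpM_le (j k : Fin n) (ψ : (Fin n → Fin 2) → ℂ) :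
    energy (swpM n j k) ψ ≤ ∑ x, ‖ψ x‖ ^ 2 := by
  rw [energy, swpM_mulVec]
  set z := star ψ ⬝ᵥ fun x => ψ (x ∘ (Equiv.swap j k)) with hz
  have hre : z.re ≤ ‖z‖ := by
    have h := Complex.abs_re_le_norm z
    exact (le_abs_self _).trans h
  refine hre.trans ?_
  have h2 : ‖z‖ ≤ ∑ x, ‖ψ x‖ * ‖ψ (x ∘ (Equiv.swap j k))‖ := by
    rw [hz, dotProduct]
    refine (norm_sum_le _ _).trans ?_
    refine Finset.sum_le_sum fun x _ => ?_
    rw [Pi.star_apply, norm_mul, norm_star]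
  refine h2.trans ?_
  have h3 : ∑ x : Fin n → Fin 2, ‖ψ (x ∘ (Equiv.swap j k))‖ ^ 2 = ∑ x, ‖ψ x‖ ^ 2 :=
    sum_comp_swap j k (fun x => ‖ψ x‖ ^ 2)
  have h4 := Finset.sum_mul_sq_le_sq_mul_sq Finset.univ (fun x : Fin n → Fin 2 => ‖ψ x‖)
    (fun x : Fin n → Fin 2 => ‖ψ (x ∘ (Equiv.swap j k))‖)
  rw [h3] at h4
  have h5 : (0:ℝ) ≤ ∑ x : Fin n → Fin 2, ‖ψ x‖ * ‖ψ (x ∘ (Equiv.swap j k))‖ :=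
    Finset.sum_nonneg fun x _ => mul_nonneg (norm_nonneg _) (norm_nonneg _)
  have h6 : (0:ℝ) ≤ ∑ x : Fin n → Fin 2, ‖ψ x‖ ^ 2 :=
    Finset.sum_nonneg fun x _ => sq_nonneg _
  nlinarith [h4, h5, h6]

end QMC

namespace QMC

variable {n : ℕ}

/-- The star interaction operator `C = Σ_a Σ_{j∈T} σ_a(v) σ_a(j)`. -/
def CC (n : ℕ) (v : Fin n) (T : Finset (Fin n)) : Matrix (Fin n → Fin 2) (Fin n → Fin 2) ℂ :=
  ∑ a : Fin 3, ∑ j ∈ T, pauliAt n v (σp a) * pauliAt n j (σp a)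

lemma CC_herm (v : Fin n) (T : Finset (Fin n)) (hv : v ∉ T) : (CC n v T)ᴴ = CC n v T := by
  unfold CC
  rw [Matrix.conjTranspose_sum]
  refine Finset.sum_congr rfl fun a _ => ?_
  rw [Matrix.conjTranspose_sum]
  refine Finset.sum_congr rfl fun j hj => ?_
  exact pauliAt_pair_herm (fun h => hv (by rw [h]; exact hj)) a

lemma CC_sq (v : Fin n) (T : Finset (Fin n)) (hv : v ∉ T) :
    CC n v T * CC n v T
      = ((3 * (T.card : ℝ) : ℝ) : ℂ) • 1 - (2 : ℂ) • CC n v T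
        + ∑ p ∈ T.offDiag, gam n p.1 p.2 := by
  classical
  set V : Fin 3 → Matrix (Fin n → Fin 2) (Fin n → Fin 2) ℂ :=
    fun a => pauliAt n v (σp a) with hV
  set A : Fin n → Fin 3 → Matrix (Fin n → Fin 2) (Fin n → Fin 2) ℂ :=
    fun j a => pauliAt n j (σp a) with hA
  -- step 1: expand the square
  have hexp : CC n v T * CC n v T
      = ∑ a : Fin 3, ∑ b : Fin 3, ∑ j ∈ T, ∑ k ∈ T, (V a * A j a) * (V b * A k b) := by
    unfold CC
    rw [Finset.sum_mul_sum]
    refine Finset.sum_congr rfl fun a _ => Finset.sum_congr rfl fun b _ => ?_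
    rw [Finset.sum_mul_sum]
  -- step 2: commute
  have hterm : ∀ (a b : Fin 3) (j : Fin n), j ∈ T → ∀ k : Fin n, k ∈ T →
      (V a * A j a) * (V b * A k b) = (V a * V b) * (A j a * A k b) := by
    intro a b j hj k hk
    have hjv : j ≠ v := fun h => hv (h ▸ hj)
    have hcomm : A j a * (V b * A k b) = V b * (A j a * A k b) := by
      rw [← Matrix.mul_assoc, pauliAt_mul_comm hjv, Matrix.mul_assoc]
    simp only [Matrix.mul_assoc]
    rw [hcomm]
  -- step 3: split double sum over T×T into diag and offDiag
  have hsplit : ∀ a b : Fin 3,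
      (∑ j ∈ T, ∑ k ∈ T, (V a * V b) * (A j a * A k b))
        = (∑ j ∈ T, (V a * V b) * (A j a * A j b))
          + ∑ p ∈ T.offDiag, (V a * V b) * (A p.1 a * A p.2 b) := by
    intro a b
    rw [← Finset.sum_product (f := fun p : Fin n × Fin n => (V a * V b) * (A p.1 a * A p.2 b))]
    rw [← Finset.diag_union_offDiag T,
      Finset.sum_union (Finset.disjoint_diag_offDiag T), Finset.sum_diag]
  have hexp2 : CC n v T * CC n v T
      = (∑ a : Fin 3, ∑ b : Fin 3, ∑ j ∈ T, (V a * V b) * (A j a * A j b))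
        + ∑ a : Fin 3, ∑ b : Fin 3, ∑ p ∈ T.offDiag, (V a * V b) * (A p.1 a * A p.2 b) := by
    rw [hexp, ← Finset.sum_add_distrib]
    refine Finset.sum_congr rfl fun a _ => ?_
    rw [← Finset.sum_add_distrib]
    refine Finset.sum_congr rfl fun b _ => ?_
    rw [Finset.sum_congr rfl (fun j hj => Finset.sum_congr rfl (hterm a b j hj)), hsplit]
  -- step 4: the diagonal part
  have hS1 : (∑ a : Fin 3, ∑ b : Fin 3, ∑ j ∈ T, (V a * V b) * (A j a * A j b))
      = ((3 * (T.card : ℝ) : ℝ) : ℂ) • 1 - (2 : ℂ) • CC n v T := by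
    have hswap : (∑ a : Fin 3, ∑ b : Fin 3, ∑ j ∈ T, (V a * V b) * (A j a * A j b))
        = ∑ j ∈ T, ∑ a : Fin 3, ∑ b : Fin 3, (V a * V b) * (A j a * A j b) :=
      calc (∑ a : Fin 3, ∑ b : Fin 3, ∑ j ∈ T, (V a * V b) * (A j a * A j b))
          = ∑ a : Fin 3, ∑ j ∈ T, ∑ b : Fin 3, (V a * V b) * (A j a * A j b) :=
            Finset.sum_congr rfl fun a _ => Finset.sum_comm
        _ = ∑ j ∈ T, ∑ a : Fin 3, ∑ b : Fin 3, (V a * V b) * (A j a * A j b) :=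
            Finset.sum_comm
    rw [hswap]
    have hp9 : ∀ j ∈ T, (∑ a : Fin 3, ∑ b : Fin 3, (V a * V b) * (A j a * A j b))
        = (3 : ℂ) • 1 - (2 : ℂ) • (∑ c : Fin 3, V c * A j c) := by
      intro j hj
      exact pair9 (fun h => hv (by rw [h]; exact hj))
    rw [Finset.sum_congr rfl hp9]
    rw [Finset.sum_sub_distrib]
    rw [Finset.sum_const]
    rw [← Finset.smul_sum]
    have hCC : (∑ j ∈ T, ∑ c : Fin 3, V c * A j c) = CC n v T := by
      unfold CC; rw [Finset.sum_comm]
    rw [hCC]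
    congr 1
    rw [← Nat.cast_smul_eq_nsmul ℂ, smul_smul]
    congr 1
    push_cast
    ring
  -- step 5: the off-diagonal part, by symmetrization
  have hS2 : (∑ a : Fin 3, ∑ b : Fin 3, ∑ p ∈ T.offDiag, (V a * V b) * (A p.1 a * A p.2 b))
      = ∑ p ∈ T.offDiag, gam n p.1 p.2 := by
    set W : Fin 3 → Fin 3 → Matrix (Fin n → Fin 2) (Fin n → Fin 2) ℂ :=
      fun a b => ∑ p ∈ T.offDiag, A p.1 a * A p.2 b with hW
    have hpull : ∀ a b : Fin 3,
        (∑ p ∈ T.offDiag, (V a * V b) * (A p.1 a * A p.2 b)) = (V a * V b) * W a b := by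
      intro a b
      rw [hW, Finset.mul_sum]
    have hWsymm : ∀ a b : Fin 3, W a b = W b a := by
      intro a b
      rw [hW]
      refine Finset.sum_bij' (fun p _ => Prod.swap p) (fun p _ => Prod.swap p)
        ?_ ?_ ?_ ?_ ?_
      · intro p hp
        obtain ⟨h1, h2, h3⟩ := Finset.mem_offDiag.mp hp
        exact Finset.mem_offDiag.mpr ⟨h2, h1, Ne.symm h3⟩
      · intro p hp
        obtain ⟨h1, h2, h3⟩ := Finset.mem_offDiag.mp hp
        exact Finset.mem_offDiag.mpr ⟨h2, h1, Ne.symm h3⟩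
      · intro p _; exact Prod.swap_swap p
      · intro p _; exact Prod.swap_swap p
      · intro p hp
        obtain ⟨h1, h2, h3⟩ := Finset.mem_offDiag.mp hp
        show A p.1 a * A p.2 b = A p.2 b * A p.1 a
        exact pauliAt_mul_comm h3 _ _
    set S2 := ∑ a : Fin 3, ∑ b : Fin 3, (V a * V b) * W a b with hS2def
    have hS2' : S2 = ∑ a : Fin 3, ∑ b : Fin 3, (V b * V a) * W a b := by
      rw [hS2def, Finset.sum_comm]
      refine Finset.sum_congr rfl fun a _ => Finset.sum_congr rfl fun b _ => ?_
      rw [hWsymm b a]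
    have hdd : S2 + S2 = ∑ a : Fin 3, ∑ b : Fin 3,
        ((V a * V b) + (V b * V a)) * W a b := by
      nth_rewrite 2 [hS2']
      rw [hS2def, ← Finset.sum_add_distrib]
      refine Finset.sum_congr rfl fun a _ => ?_
      rw [← Finset.sum_add_distrib]
      refine Finset.sum_congr rfl fun b _ => ?_
      rw [add_mul]
    have hanti : ∀ a b : Fin 3, ((V a * V b) + (V b * V a)) * W a b
        = if a = b then ((2:ℂ) • 1) * W a b else 0 := by
      intro a b
      simp only [hV]
      rw [pauliAt_anti a b]
      by_cases h : a = b
      · rw [if_pos h, if_pos h]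
      · rw [if_neg h, if_neg h, Matrix.zero_mul]
    have hdd2 : S2 + S2 = ∑ a : Fin 3, W a a + ∑ a : Fin 3, W a a := by
      rw [hdd, Finset.sum_congr rfl fun a _ => Finset.sum_congr rfl fun b _ => hanti a b]
      have : ∀ a : Fin 3, (∑ b : Fin 3, if a = b then ((2:ℂ) • 1) * W a b else 0)
          = ((2:ℂ) • 1) * W a a := by
        intro a
        rw [Finset.sum_ite_eq Finset.univ a (fun b => ((2:ℂ) • 1) * W a b),
          if_pos (Finset.mem_univ a)]
      rw [Finset.sum_congr rfl fun a _ => this a]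
      rw [← Finset.sum_add_distrib]
      refine Finset.sum_congr rfl fun a _ => ?_
      rw [Matrix.smul_mul, Matrix.one_mul, two_smul]
    have hS2W : S2 = ∑ a : Fin 3, W a a := by
      have h2 : (2 : ℂ) • S2 = (2 : ℂ) • (∑ a : Fin 3, W a a) := by
        rw [two_smul, two_smul, hdd2]
      exact smul_right_injective _ (two_ne_zero) h2
    have hfin : (∑ a : Fin 3, ∑ b : Fin 3, ∑ p ∈ T.offDiag, (V a * V b) * (A p.1 a * A p.2 b))
        = ∑ a : Fin 3, ∑ b : Fin 3, (V a * V b) * W a b :=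
      Finset.sum_congr rfl fun a _ => Finset.sum_congr rfl fun b _ => hpull a b
    rw [hfin, ← hS2def, hS2W, hW]
    rw [Finset.sum_comm]
    exact Finset.sum_congr rfl fun p _ => rfl
  rw [hexp2, hS1, hS2]

end QMC

namespace QMC

variable {n : ℕ}

lemma energy_two {m : Type} [Fintype m] [DecidableEq m] (A : Matrix m m ℂ) (ψ : m → ℂ) :
    energy ((2 : ℂ) • A) ψ = 2 * energy A ψ := by
  have h : ((2 : ℝ) : ℂ) = (2 : ℂ) := by norm_num
  rw [← h, energy_smul_real]

lemma energy_gam_le {j k : Fin n} (hjk : j ≠ k) (ψ : (Fin n → Fin 2) → ℂ)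
    (hψ : ∑ x, ‖ψ x‖ ^ 2 = 1) : energy (gam n j k) ψ ≤ 1 := by
  rw [gam_eq_swp hjk, energy_sub, energy_two, energy_one, hψ]
  have := energy_swpM_le j k ψ
  rw [hψ] at this
  linarith

lemma energy_CC_ge (v : Fin n) (T : Finset (Fin n)) (hv : v ∉ T)
    (ψ : (Fin n → Fin 2) → ℂ) (hψ : ∑ x, ‖ψ x‖ ^ 2 = 1) :
    -((T.card : ℝ) + 2) ≤ energy (CC n v T) ψ := by
  set t : ℝ := (T.card : ℝ) with ht
  have ht0 : 0 ≤ t := Nat.cast_nonneg _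
  set c := energy (CC n v T) ψ with hc
  -- Cauchy–Schwarz: c² ≤ energy (C²)
  have hsq : c ^ 2 ≤ energy (CC n v T * CC n v T) ψ := by
    rw [energy_sq _ (CC_herm v T hv) ψ]
    have := dot_re_sq_le ψ (CC n v T *ᵥ ψ)
    rw [hψ, one_mul] at this
    exact this
  -- the identity
  have hid : energy (CC n v T * CC n v T) ψ
      = 3 * t - 2 * c + energy (∑ p ∈ T.offDiag, gam n p.1 p.2) ψ := by
    rw [CC_sq v T hv, energy_add, energy_sub, energy_smul_real, energy_two, energy_one, hψ]
    ring
  -- bound the gamma sum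
  have hgam : energy (∑ p ∈ T.offDiag, gam n p.1 p.2) ψ ≤ t * t - t := by
    rw [energy_sum]
    have hb : ∀ p ∈ T.offDiag, energy (gam n p.1 p.2) ψ ≤ 1 := by
      intro p hp
      exact energy_gam_le (Finset.mem_offDiag.mp hp).2.2 ψ hψ
    calc ∑ p ∈ T.offDiag, energy (gam n p.1 p.2) ψ
        ≤ ∑ _p ∈ T.offDiag, (1 : ℝ) := Finset.sum_le_sum hb
      _ = (T.offDiag.card : ℝ) := by rw [Finset.sum_const, nsmul_eq_mul, mul_one]
      _ = t * t - t := by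
          rw [Finset.offDiag_card]
          have hle : T.card ≤ T.card * T.card := by
            rcases Nat.eq_zero_or_pos T.card with h | h
            · simp [h]
            · exact Nat.le_mul_of_pos_left _ h
          rw [Nat.cast_sub hle]
          push_cast
          ring
  have hfinal : c ^ 2 + 2 * c - t * t - 2 * t ≤ 0 := by
    have := hsq.trans (le_of_eq hid)
    nlinarith [hgam]
  nlinarith [hfinal, sq_nonneg (c + t + 2), ht0]

/-- The two-site SWAP operator. -/
def swapAt (n : ℕ) (v j : Fin n) : Matrix (Fin n → Fin 2) (Fin n → Fin 2) ℂ :=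
  (1/2 : ℂ) • ((1 : Matrix (Fin n → Fin 2) (Fin n → Fin 2) ℂ)
    + ∑ a : Fin 3, pauliAt n v (σp a) * pauliAt n j (σp a))

lemma hTerm_eq_swap (i j : Fin n) : hTerm n i j = 1 - swapAt n i j := by
  unfold hTerm swapAt
  rw [Fin.sum_univ_three, sigma0, sigma1, sigma2]
  module

lemma sum_swapAt_eq (v : Fin n) (T : Finset (Fin n)) :
    (∑ j ∈ T, swapAt n v j)
      = (1/2 : ℂ) • (((T.card : ℝ) : ℂ) • 1 + CC n v T) := by
  unfold swapAt CC
  rw [← Finset.smul_sum]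
  congr 1
  rw [Finset.sum_add_distrib, Finset.sum_const]
  congr 1
  · rw [← Nat.cast_smul_eq_nsmul ℂ]
    norm_cast
  · rw [Finset.sum_comm]

lemma uniform_star_energy (v : Fin n) (T : Finset (Fin n)) (hv : v ∉ T)
    (ψ : (Fin n → Fin 2) → ℂ) (hψ : ∑ x, ‖ψ x‖ ^ 2 = 1) :
    (-1 : ℝ) ≤ energy (∑ j ∈ T, swapAt n v j) ψ := by
  rw [sum_swapAt_eq, energy_half, energy_add, energy_smul_real, energy_one, hψ]
  have := energy_CC_ge v T hv ψ hψ
  set c := energy (CC n v T) ψ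
  have ht0 : (0:ℝ) ≤ (T.card : ℝ) := Nat.cast_nonneg _
  linarith

lemma weighted_star_energy (v : Fin n) (ψ : (Fin n → Fin 2) → ℂ)
    (hψ : ∑ x, ‖ψ x‖ ^ 2 = 1) :
    ∀ T : Finset (Fin n), v ∉ T → ∀ ω : Fin n → ℝ, (∀ j ∈ T, 0 ≤ ω j) →
      -(T.fold max 0 ω) ≤ energy (∑ j ∈ T, (ω j : ℂ) • swapAt n v j) ψ := by
  intro T
  induction T using Finset.strongInduction with
  | _ T ih =>
    intro hv ω hω
    rcases T.eq_empty_or_nonempty with hT | hT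
    · subst hT
      simp [energy_zero]
    · obtain ⟨j₀, hj₀, hmin⟩ := Finset.exists_min_image T ω hT
      set μ := ω j₀ with hμ
      have hμ0 : 0 ≤ μ := hω j₀ hj₀
      have hdec : (∑ j ∈ T, (ω j : ℂ) • swapAt n v j)
          = (μ : ℂ) • (∑ j ∈ T, swapAt n v j)
            + ∑ j ∈ T.erase j₀, ((ω j - μ : ℝ) : ℂ) • swapAt n v j := by
        rw [Finset.smul_sum]
        have h1 : ∑ j ∈ T.erase j₀, ((ω j - μ : ℝ) : ℂ) • swapAt n v j
            = ∑ j ∈ T, ((ω j - μ : ℝ) : ℂ) • swapAt n v j := by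
          apply Finset.sum_erase
          rw [sub_self]
          norm_num
        rw [h1, ← Finset.sum_add_distrib]
        refine Finset.sum_congr rfl fun j _ => ?_
        rw [← add_smul]
        congr 1
        push_cast
        ring
      rw [hdec, energy_add, energy_smul_real]
      have hu := uniform_star_energy v T hv ψ hψ
      have hrec := ih (T.erase j₀) (Finset.erase_ssubset hj₀)
        (fun hm => hv (Finset.mem_of_mem_erase hm)) (fun j => ω j - μ)
        (fun j hj => by
          have := hmin j (Finset.mem_of_mem_erase hj)
          show (0:ℝ) ≤ ω j - μ
          linarith)
      have hfold : (T.erase j₀).fold max 0 (fun j => ω j - μ) ≤ T.fold max 0 ω - μ := by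
        rw [Finset.fold_max_le]
        constructor
        · have : μ ≤ T.fold max 0 ω :=
            (Finset.le_fold_max μ).mpr (Or.inr ⟨j₀, hj₀, le_rfl⟩)
          linarith
        · intro x hx
          have : ω x ≤ T.fold max 0 ω :=
            (Finset.le_fold_max (ω x)).mpr (Or.inr ⟨x, Finset.mem_of_mem_erase hx, le_rfl⟩)
          linarith
      have hμe : μ * energy (∑ j ∈ T, swapAt n v j) ψ ≥ -μ := by
        nlinarith [hu, hμ0]
      linarith

end QMC

namespace QMC

section Final

variable (n : ℕ) (G : SimpleGraph (Fin n)) [DecidableRel G.Adj] (w : Fin n → Fin n → ℝ)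

lemma star_bound (hnn : ∀ i j, 0 ≤ w i j) (v : Fin n)
    (ψ : (Fin n → Fin 2) → ℂ) (hψ : ∑ x, ‖ψ x‖ ^ 2 = 1) :
    energy (∑ j, if G.Adj v j then (w v j : ℂ) • hTerm n v j else 0) ψ
      ≤ (∑ j, if G.Adj v j then w v j else 0) + maxIncident n G w v := by
  classical
  set T : Finset (Fin n) := Finset.univ.filter (fun j => G.Adj v j) with hT
  have hv : v ∉ T := by
    rw [hT, Finset.mem_filter]
    rintro ⟨-, h⟩
    exact G.irrefl h
  have hsum1 : (∑ j, if G.Adj v j then (w v j : ℂ) • hTerm n v j else 0)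
      = ∑ j ∈ T, (w v j : ℂ) • hTerm n v j := by
    rw [hT, Finset.sum_filter]
  have hsum2 : (∑ j, if G.Adj v j then w v j else 0) = ∑ j ∈ T, w v j := by
    rw [hT, Finset.sum_filter]
  rw [hsum1, hsum2]
  have hdec : (∑ j ∈ T, (w v j : ℂ) • hTerm n v j)
      = (∑ j ∈ T, (w v j : ℂ) • (1 : Matrix (Fin n → Fin 2) (Fin n → Fin 2) ℂ))
        - ∑ j ∈ T, (w v j : ℂ) • swapAt n v j := by
    rw [← Finset.sum_sub_distrib]
    refine Finset.sum_congr rfl fun j _ => ?_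
    rw [hTerm_eq_swap, smul_sub]
  rw [hdec, energy_sub]
  have h1 : energy (∑ j ∈ T, (w v j : ℂ) • (1 : Matrix (Fin n → Fin 2) (Fin n → Fin 2) ℂ)) ψ
      = ∑ j ∈ T, w v j := by
    rw [energy_sum]
    refine Finset.sum_congr rfl fun j _ => ?_
    rw [energy_smul_real, energy_one, hψ, mul_one]
  rw [h1]
  have h2 := weighted_star_energy v ψ hψ T hv (w v) (fun j _ => hnn v j)
  have hfold : T.fold max 0 (w v) = maxIncident n G w v := by
    rw [hT, maxIncident]
  rw [hfold] at h2
  linarith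

lemma OPT_le_WS (hnn : ∀ i j, 0 ≤ w i j) :
    OPTval n G w ≤ totalW n G w + (∑ v, maxIncident n G w v) / 2 := by
  apply OPT_le
  intro ψ hψ
  unfold hamG
  rw [energy_half, energy_sum]
  have hb : ∀ v : Fin n, energy (∑ j, if G.Adj v j then (w v j : ℂ) • hTerm n v j else 0) ψ
      ≤ (∑ j, if G.Adj v j then w v j else 0) + maxIncident n G w v :=
    fun v => star_bound n G w hnn v ψ hψ
  have hsum : ∑ v, energy (∑ j, if G.Adj v j then (w v j : ℂ) • hTerm n v j else 0) ψ
      ≤ ∑ v, ((∑ j, if G.Adj v j then w v j else 0) + maxIncident n G w v) :=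
    Finset.sum_le_sum fun v _ => hb v
  have hW : ∑ v, ((∑ j, if G.Adj v j then w v j else 0) + maxIncident n G w v)
      = 2 * totalW n G w + ∑ v, maxIncident n G w v := by
    rw [Finset.sum_add_distrib, totalW]
    ring
  linarith [hsum, hW.le, hW.ge]

lemma S_nonneg : 0 ≤ ∑ v, maxIncident n G w v := by
  apply Finset.sum_nonneg
  intro v _
  rw [maxIncident]
  exact (Finset.le_fold_max (0:ℝ)).mpr (Or.inl le_rfl)

end Final

end QMC

/-- For a weighted graph `G` with nonnegative edge weights and total
weight `W = ∑_{e∈E} w_e > 0`,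
`PROD(G) ≥ (1/3 + (2/3)·W/(2W + ∑_{v∈V} max_{e∋v} w_e)) · OPT(G)`. -/
theorem prod_ratio_weighted (n : ℕ) (G : SimpleGraph (Fin n)) [DecidableRel G.Adj]
    (w : Fin n → Fin n → ℝ) (hsym : ∀ i j, w i j = w j i) (hnn : ∀ i j, 0 ≤ w i j)
    (hW : 0 < totalW n G w) :
    PRODval n G w ≥
      (1 / 3 + 2 / 3 * (totalW n G w /
          (2 * totalW n G w + ∑ v, maxIncident n G w v))) * OPTval n G w := by
  have hM := QMC.Mcut_le_PROD n G w
  have h3M := QMC.OPT_le_3M n G w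
  have hWS := QMC.OPT_le_WS n G w hnn
  have hS0 := QMC.S_nonneg n G w
  set W := totalW n G w with hWdef
  set S := ∑ v, maxIncident n G w v with hSdef
  set OPT := OPTval n G w with hOPTdef
  set PROD := PRODval n G w with hPRODdef
  have hd : 0 < 2 * W + S := by linarith
  set r := W / (2 * W + S) with hr
  have hr0 : 0 ≤ r := div_nonneg hW.le hd.le
  have hrW : r * (2 * W + S) = W := div_mul_cancel₀ _ (ne_of_gt hd)
  have h5 : r * OPT ≤ W / 2 := by nlinarith [mul_le_mul_of_nonneg_left hWS hr0]
  have h6 : OPT + W ≤ 3 * PROD := by linarith [h3M, hM]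
  rw [ge_iff_le]
  nlinarith [h5, h6]
end
end

section
/- Let G = (V,E,w) be a weighted graph with nonnegative edge weights. Then there exist edge subsets M, F ⊆ E such that M is a matching (no two edges of M share a vertex), F is a forest (the subgraph (V,F) contains no cycle), and ∑_{v∈V} max_{e incident to v} w_e = ∑_{e∈M} w_e + ∑_{e∈F} w_e, where the max over incident edges of an isolated vertex is taken to be 0. -/
open Matrix Finset
noncomputable section

section MFDaux
namespace MFD

variable {n : ℕ}

/-- Injective key for tie-breaking: weight first, then an arbitrary injection to ℕ. -/
noncomputable def key (f : Sym2 (Fin n) → ℝ) (e : Sym2 (Fin n)) : ℝ ×ₗ ℕ :=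
  toLex (f e, (Fintype.equivFin (Sym2 (Fin n))) e)

lemma key_inj (f : Sym2 (Fin n) → ℝ) : Function.Injective (key f) := by
  intro a b h
  unfold key at h
  have h2 := congrArg ofLex h
  rw [ofLex_toLex, ofLex_toLex] at h2
  exact (Fintype.equivFin (Sym2 (Fin n))).injective (Fin.val_injective (congrArg Prod.snd h2))

lemma f_le_of_key_le {f : Sym2 (Fin n) → ℝ} {a b : Sym2 (Fin n)} (h : key f a ≤ key f b) :
    f a ≤ f b := by
  unfold key at h
  rcases Prod.Lex.le_iff.mp h with h1 | ⟨h1, _⟩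
  · exact le_of_lt h1
  · exact le_of_eq h1

/-- In a cycle through `a`, there are two distinct edges containing `a`. -/
lemma two_edges_of_cycle {V : Type*} {H : SimpleGraph V} {a : V} (q : H.Walk a a)
    (hq : q.IsCycle) :
    ∃ e1 e2, e1 ∈ q.edges ∧ e2 ∈ q.edges ∧ e1 ≠ e2 ∧ a ∈ e1 ∧ a ∈ e2 := by
  cases q with
  | nil => exact absurd rfl hq.ne_nil
  | @cons _ b _ h p =>
    have hlen : 3 ≤ p.length + 1 := by simpa using hq.three_le_length
    have hpne : p.edges ≠ [] := by
      intro h0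
      have : p.length = 0 := by simpa [h0] using p.length_edges.symm
      omega
    obtain ⟨c, e2, hae2, he2p⟩ :
        ∃ (c : V) (e2 : Sym2 V), a ∈ e2 ∧ e2 ∈ p.edges := by
      cases hr : p.reverse with
      | nil =>
        exfalso
        apply hpne
        have h0 := congrArg SimpleGraph.Walk.edges hr
        rw [p.edges_reverse] at h0
        simpa using h0
      | @cons _ c _ h2 p2 =>
        refine ⟨c, s(a, c), Sym2.mem_mk_left a c, ?_⟩
        have : s(a, c) ∈ p.reverse.edges := by rw [hr]; simp
        rw [p.edges_reverse, List.mem_reverse] at this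
        exact this
    refine ⟨s(a, b), e2, ?_, ?_, ?_, ?_, hae2⟩
    · simp
    · simp [he2p]
    · intro hcontr
      have hnd := hq.edges_nodup
      simp only [SimpleGraph.Walk.edges_cons, List.nodup_cons] at hnd
      exact hnd.1 (hcontr ▸ he2p)
    · exact Sym2.mem_mk_left a b

/-- Main combinatorial lemma, with weights as a function on `Sym2`. -/
theorem main (G : SimpleGraph (Fin n)) [DecidableRel G.Adj]
    (f : Sym2 (Fin n) → ℝ) (hnn : ∀ e, 0 ≤ f e) :
    ∃ M F : Finset (Sym2 (Fin n)),
      ↑M ⊆ G.edgeSet ∧ ↑F ⊆ G.edgeSet ∧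
      (∀ e ∈ M, ∀ e' ∈ M, e ≠ e' → ∀ v : Fin n, v ∈ e → v ∉ e') ∧
      (SimpleGraph.fromEdgeSet (↑F : Set (Sym2 (Fin n)))).IsAcyclic ∧
      ∑ v, (G.neighborFinset v).fold max 0 (fun j => f s(v, j)) =
        (∑ e ∈ M, f e) + ∑ e ∈ F, f e := by
  classical
  -- incident edge set
  set I : Fin n → Finset (Sym2 (Fin n)) :=
    fun v => (G.neighborFinset v).image (fun j => s(v, j)) with hI
  have hI_mem : ∀ v e, e ∈ I v ↔ ∃ j, G.Adj v j ∧ e = s(v, j) := by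
    intro v e
    simp [hI, eq_comm]
  have hI_edge : ∀ v e, e ∈ I v → e ∈ G.edgeSet := by
    intro v e he
    obtain ⟨j, hj, rfl⟩ := (hI_mem v e).mp he
    exact hj
  have hI_vmem : ∀ v e, e ∈ I v → v ∈ e := by
    intro v e he
    obtain ⟨j, hj, rfl⟩ := (hI_mem v e).mp he
    exact Sym2.mem_mk_left v j
  have hI_of : ∀ v e, e ∈ G.edgeSet → v ∈ e → e ∈ I v := by
    intro v e he hv
    induction e with
    | _ x y =>
      rw [Sym2.mem_iff] at hv
      rcases hv with rfl | rfl
      · exact (hI_mem v _).mpr ⟨y, he, rfl⟩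
      · exact (hI_mem v _).mpr ⟨x, (SimpleGraph.mem_edgeSet ..).mp
          (by rwa [Sym2.eq_swap] at he), Sym2.eq_swap⟩
  -- choice function
  have hch : ∀ v : Fin n, ∃ o : Option (Sym2 (Fin n)),
      (∀ e, o = some e → e ∈ I v ∧ ∀ e' ∈ I v, key f e' ≤ key f e) ∧
      ((I v).Nonempty → o ≠ none) := by
    intro v
    by_cases h : (I v).Nonempty
    · obtain ⟨e, he, hmax⟩ := (I v).exists_max_image (key f) h
      refine ⟨some e, fun e' h' => ?_, fun _ => by simp⟩
      injection h' with h''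
      subst h''
      exact ⟨he, hmax⟩
    · exact ⟨none, fun e h' => by simp at h', fun h' => absurd h' h⟩
  choose ch hch1 hch2 using hch
  -- F and M
  set F : Finset (Sym2 (Fin n)) :=
    Finset.univ.biUnion (fun v => (ch v).toFinset) with hF
  have hF_mem : ∀ e, e ∈ F ↔ ∃ v, ch v = some e := by
    intro e; simp [hF, Option.mem_toFinset, eq_comm]
  set M : Finset (Sym2 (Fin n)) :=
    F.filter (fun e => ∀ v ∈ e, ch v = some e) with hM
  have hF_edge : (F : Set (Sym2 (Fin n))) ⊆ G.edgeSet := by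
    intro e he
    obtain ⟨v, hv⟩ := (hF_mem e).mp (by simpa using he)
    exact hI_edge v e (hch1 v e hv).1
  have hM_sub : M ⊆ F := Finset.filter_subset _ _
  refine ⟨M, F, fun e he => hF_edge (hM_sub (by simpa using he)), hF_edge, ?_, ?_, ?_⟩
  · -- matching
    intro e he e' he' hne v hv hv'
    have h1 : ch v = some e := (Finset.mem_filter.mp he).2 v hv
    have h2 : ch v = some e' := (Finset.mem_filter.mp he').2 v hv'
    exact hne (by rw [h1] at h2; exact Option.some.inj h2)
  · -- acyclic
    intro u c hc
    have hedges : ∀ e ∈ c.edges, e ∈ F := by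
      intro e he
      have := c.edges_subset_edgeSet he
      rw [SimpleGraph.edgeSet_fromEdgeSet] at this
      simpa using this.1
    have hne : c.edges.toFinset.Nonempty := by
      have h3 : 3 ≤ c.length := hc.three_le_length
      have : c.edges ≠ [] := by
        intro h0
        have : c.length = 0 := by simpa [h0] using c.length_edges.symm
        omega
      simpa [List.toFinset_eq_empty_iff] using this
    obtain ⟨em, hem, hmin⟩ := c.edges.toFinset.exists_min_image (key f) hne
    rw [List.mem_toFinset] at hem
    have hemF : em ∈ F := hedges em hem
    obtain ⟨a, ha⟩ := (hF_mem em).mp hemF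
    have haem : a ∈ em := hI_vmem a em (hch1 a em ha).1
    -- a is in the support of c
    have hasup : a ∈ c.support := by
      induction em with
      | _ x y =>
        rw [Sym2.mem_iff] at haem
        rcases haem with rfl | rfl
        · exact SimpleGraph.Walk.fst_mem_support_of_mem_edges c hem
        · exact SimpleGraph.Walk.snd_mem_support_of_mem_edges c hem
    -- rotate
    have hc' := hc.rotate hasup
    obtain ⟨e1, e2, he1, he2, hne12, hae1, hae2⟩ := two_edges_of_cycle _ hc'
    have hrot := SimpleGraph.Walk.rotate_edges c a hasup
    have he1c : e1 ∈ c.edges := hrot.perm.mem_iff.mp he1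
    have he2c : e2 ∈ c.edges := hrot.perm.mem_iff.mp he2
    -- pick e' ≠ em among e1 e2 containing a
    have key_eq : ∀ e', e' ∈ c.edges → a ∈ e' → e' = em := by
      intro e' he' hae'
      have h1 : key f e' ≤ key f em :=
        (hch1 a em ha).2 e' (hI_of a e' (hF_edge (by simpa using hedges e' he')) hae')
      have h2 : key f em ≤ key f e' := hmin e' (List.mem_toFinset.mpr he')
      exact key_inj f (le_antisymm h1 h2)
    exact hne12 ((key_eq e1 he1c hae1).trans (key_eq e2 he2c hae2).symm)
  · -- sum identity
    set S : Finset (Fin n) := Finset.univ.filter (fun v => (I v).Nonempty) with hS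
    set chE : Fin n → Sym2 (Fin n) := fun v => (ch v).getD s(v, v) with hchE
    have hSch : ∀ v ∈ S, ch v = some (chE v) := by
      intro v hv
      have := hch2 v (by simpa [hS] using hv)
      cases h : ch v with
      | none => exact absurd h this
      | some e => simp [hchE, h]
    -- g v = f (chE v) on S
    have hg : ∀ v ∈ S, (G.neighborFinset v).fold max 0 (fun j => f s(v, j)) = f (chE v) := by
      intro v hv
      have hch' := hSch v hv
      obtain ⟨hmem, hmax⟩ := hch1 v (chE v) hch'
      apply le_antisymm
      · rw [Finset.fold_max_le]
        refine ⟨hnn _, fun j hj => ?_⟩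
        exact f_le_of_key_le (hmax s(v, j)
          ((hI_mem v _).mpr ⟨j, by simpa using hj, rfl⟩))
      · rw [Finset.le_fold_max]
        obtain ⟨j, hj, hje⟩ := (hI_mem v _).mp hmem
        exact Or.inr ⟨j, by simpa using hj, le_of_eq (congrArg f hje)⟩
    have hg0 : ∀ v ∈ Finset.univ, v ∉ S →
        (G.neighborFinset v).fold max 0 (fun j => f s(v, j)) = 0 := by
      intro v _ hv
      have : G.neighborFinset v = ∅ := by
        by_contra h
        obtain ⟨j, hj⟩ := Finset.nonempty_of_ne_empty h
        exact hv (by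
          simp only [hS, Finset.mem_filter, Finset.mem_univ, true_and]
          exact ⟨s(v, j), (hI_mem v _).mpr ⟨j, by simpa using hj, rfl⟩⟩)
      simp [this]
    rw [← Finset.sum_subset (Finset.subset_univ S) hg0, Finset.sum_congr rfl hg]
    -- fiberwise
    have hmapsto : ∀ v ∈ S, chE v ∈ F := fun v hv => (hF_mem _).mpr ⟨v, hSch v hv⟩
    rw [← Finset.sum_fiberwise_of_maps_to hmapsto (fun v => f (chE v))]
    -- compute fibers
    have hfiber : ∀ e ∈ F, (S.filter (fun v => chE v = e)).card =
        if e ∈ M then 2 else 1 := by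
      intro e heF
      have heE : e ∈ G.edgeSet := hF_edge (by simpa using heF)
      have hfib_mem : ∀ v, v ∈ S.filter (fun v => chE v = e) ↔ ch v = some e := by
        intro v
        constructor
        · intro hv
          rw [Finset.mem_filter] at hv
          rw [hSch v hv.1, hv.2]
        · intro hv
          have hvS : v ∈ S := by
            simp only [hS, Finset.mem_filter, Finset.mem_univ, true_and]
            exact ⟨e, (hch1 v e hv).1⟩
          refine Finset.mem_filter.mpr ⟨hvS, ?_⟩
          simp [hchE, hv]
      induction e with
      | _ x y =>
        have hxy : x ≠ y := (SimpleGraph.mem_edgeSet ..).mp heE |>.ne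
        have hsub : S.filter (fun v => chE v = s(x, y)) ⊆ {x, y} := by
          intro v hv
          have hv' := (hfib_mem v).mp hv
          have := hI_vmem v _ (hch1 v _ hv').1
          rw [Sym2.mem_iff] at this
          simpa using this
        obtain ⟨v0, hv0⟩ := (hF_mem _).mp heF
        have hv0f : v0 ∈ S.filter (fun v => chE v = s(x, y)) := (hfib_mem v0).mpr hv0
        by_cases hM' : s(x, y) ∈ M
        · rw [if_pos hM']
          have hMboth := (Finset.mem_filter.mp hM').2
          have hxf : x ∈ S.filter (fun v => chE v = s(x, y)) :=
            (hfib_mem x).mpr (hMboth x (Sym2.mem_mk_left x y))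
          have hyf : y ∈ S.filter (fun v => chE v = s(x, y)) :=
            (hfib_mem y).mpr (hMboth y (Sym2.mem_mk_right x y))
          have : S.filter (fun v => chE v = s(x, y)) = {x, y} := by
            apply Finset.Subset.antisymm hsub
            intro v hv
            rcases Finset.mem_insert.mp hv with rfl | hv
            · exact hxf
            · rw [Finset.mem_singleton] at hv; subst hv; exact hyf
          rw [this, Finset.card_insert_of_notMem (by simpa using hxy),
            Finset.card_singleton]
        · rw [if_neg hM']
          have hnot : ¬ ∀ v ∈ s(x, y), ch v = some s(x, y) := by
            intro hall
            exact hM' (Finset.mem_filter.mpr ⟨heF, hall⟩)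
          push_neg at hnot
          obtain ⟨v1, hv1mem, hv1⟩ := hnot
          have hv1f : v1 ∉ S.filter (fun v => chE v = s(x, y)) := by
            intro h; exact hv1 ((hfib_mem v1).mp h)
          -- fiber ⊆ {x,y} \ {v1}, nonempty
          apply le_antisymm
          · by_contra h
            push_neg at h
            have h2 : 2 ≤ (S.filter (fun v => chE v = s(x, y))).card := h
            have hcard : (S.filter (fun v => chE v = s(x, y))).card ≤ 2 := by
              calc (S.filter (fun v => chE v = s(x, y))).card ≤ ({x, y} : Finset (Fin n)).card :=
                    Finset.card_le_card hsub
                _ ≤ 2 := Finset.card_insert_le _ _ |>.trans (by simp)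
            have hall : S.filter (fun v => chE v = s(x, y)) = {x, y} := by
              apply Finset.eq_of_subset_of_card_le hsub
              rw [Finset.card_insert_of_notMem (by simpa using hxy), Finset.card_singleton]
              omega
            have : v1 ∈ ({x, y} : Finset (Fin n)) := by
              rw [Sym2.mem_iff] at hv1mem
              simpa using hv1mem
            rw [← hall] at this
            exact hv1f this
          · exact Finset.card_pos.mpr ⟨v0, hv0f⟩
    -- finish
    have : ∀ e ∈ F, ∑ v ∈ S.filter (fun v => chE v = e), f (chE v) =
        (if e ∈ M then 2 else 1 : ℕ) • f e := by
      intro e he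
      rw [← hfiber e he]
      rw [Finset.sum_congr rfl (fun v hv => by
        rw [(Finset.mem_filter.mp hv).2]), Finset.sum_const]
    rw [Finset.sum_congr rfl this]
    have : ∀ e ∈ F, ((if e ∈ M then 2 else 1 : ℕ) • f e) = f e + (if e ∈ M then f e else 0) := by
      intro e _
      by_cases h : e ∈ M <;> simp [h, two_smul, one_smul]
    rw [Finset.sum_congr rfl this, Finset.sum_add_distrib, ← Finset.sum_filter,
      Finset.filter_mem_eq_inter, Finset.inter_eq_right.mpr hM_sub]
    exact add_comm _ _

end MFD
end MFDaux

/-- For any weighted graph `G` with nonnegative edge weights there are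
edge subsets `M, F ⊆ E` such that `M` is a matching (no two distinct edges of `M` share a
vertex), `F` is a forest (the graph with edge set `F` is acyclic), and
`∑_{v∈V} max_{e∋v} w_e = ∑_{e∈M} w_e + ∑_{e∈F} w_e`. -/
theorem exists_matching_forest_decomposition (n : ℕ) (G : SimpleGraph (Fin n))
    [DecidableRel G.Adj] (w : Fin n → Fin n → ℝ)
    (hsym : ∀ i j, w i j = w j i) (hnn : ∀ i j, 0 ≤ w i j) :
    ∃ M F : Finset (Sym2 (Fin n)),
      ↑M ⊆ G.edgeSet ∧ ↑F ⊆ G.edgeSet ∧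
      (∀ e ∈ M, ∀ e' ∈ M, e ≠ e' → ∀ v : Fin n, v ∈ e → v ∉ e') ∧
      (SimpleGraph.fromEdgeSet (↑F : Set (Sym2 (Fin n)))).IsAcyclic ∧
      ∑ v, maxIncident n G w v =
        (∑ e ∈ M, Sym2.lift ⟨w, fun a b => hsym a b⟩ e) +
          ∑ e ∈ F, Sym2.lift ⟨w, fun a b => hsym a b⟩ e := by
  classical
  have hnn' : ∀ e, 0 ≤ Sym2.lift ⟨w, fun a b => hsym a b⟩ e := by
    intro e
    induction e with
    | _ x y => simpa using hnn x y
  obtain ⟨M, F, hM, hF, hmatch, hacyc, hsum⟩ :=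
    MFD.main G (Sym2.lift ⟨w, fun a b => hsym a b⟩) hnn'
  refine ⟨M, F, hM, hF, hmatch, hacyc, ?_⟩
  rw [← hsum]
  apply Finset.sum_congr rfl
  intro v _
  rw [maxIncident, SimpleGraph.neighborFinset_eq_filter]
  apply Finset.fold_congr
  intro j _
  simp
end
end

section
/- The minimum over the region 0 ≤ x ≤ y ≤ 1 of (1/(2 + y + x)) · max{ 2y, 3x + 1, (4 + x + y)/3 } is at least 0.55. -/
/-- For all `(x, y)` with `0 ≤ x ≤ y ≤ 1`,
`(1/(2+y+x)) · max{2y, 3x+1, (4+x+y)/3} ≥ 0.55`; that is, the minimum of this quantity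
over the region is at least `0.55`. -/
theorem min_two_var_ratio_ge :
    ∀ x y : ℝ, 0 ≤ x → x ≤ y → y ≤ 1 →
      0.55 ≤ (1 / (2 + y + x)) * max (max (2 * y) (3 * x + 1)) ((4 + x + y) / 3) := by
  intro x y hx hxy hy1
  have hd : (0:ℝ) < 2 + y + x := by linarith
  rw [one_div, inv_mul_eq_div, le_div_iff₀ hd]
  have h1 : 2 * y ≤ max (max (2 * y) (3 * x + 1)) ((4 + x + y) / 3) :=
    le_trans (le_max_left _ _) (le_max_left _ _)
  have h2 : 3 * x + 1 ≤ max (max (2 * y) (3 * x + 1)) ((4 + x + y) / 3) :=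
    le_trans (le_max_right _ _) (le_max_left _ _)
  have h3 : (4 + x + y) / 3 ≤ max (max (2 * y) (3 * x + 1)) ((4 + x + y) / 3) :=
    le_max_right _ _
  linarith
end
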